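/- arXiv:1107.4926 — 5 statements merged into one kernel-verified Lean document; each statement's English description precedes it below -/
import Mathlib

section
/- For every x ∈ H, ∫₀^∞ ‖cfc(μ ↦ μ³ e^{−μt/2} sin((√3/2)μt))(A) x‖² dt ≤ (3/8) · ‖A^{5/2} x‖², where for each t ≥ 0, cfc(μ ↦ μ³ e^{−μt/2} sin((√3/2)μt))(A) denotes the bounded operator obtained by applying the continuous functional calculus of A to that function of μ. -/
set_option maxHeartbeats 1000000

open MeasureTheory Set Filter ContinuousLinearMap RCLike
open scoped ENNReal NNReal

section Aux

lemma aux_deriv (μ : ℝ) (t : ℝ) :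
    HasDerivAt (fun t : ℝ => μ ^ 5 / 2 * (Real.exp (-(μ * t)) *
        (-1 + Real.cos (Real.sqrt 3 * μ * t) / 4 - Real.sqrt 3 * Real.sin (Real.sqrt 3 * μ * t) / 4)))
      ((μ ^ 3 * Real.exp (-(μ * t / 2)) * Real.sin (Real.sqrt 3 / 2 * μ * t)) ^ 2) t := by
  have h0 : HasDerivAt (fun t : ℝ => -(μ * t)) (-μ) t := by
    exact (((hasDerivAt_id t).const_mul μ).neg).congr_deriv (by ring)
  have hexp := h0.exp
  have h1 : HasDerivAt (fun t : ℝ => Real.sqrt 3 * μ * t) (Real.sqrt 3 * μ) t := by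
    simpa using (hasDerivAt_id t).const_mul (Real.sqrt 3 * μ)
  have hcos := h1.cos
  have hsin := h1.sin
  have H := ((hexp.mul ((((hcos.div_const 4).const_add (-1)).sub
      ((hsin.const_mul (Real.sqrt 3)).div_const 4)))).const_mul (μ ^ 5 / 2))
  refine H.congr_deriv ?_
  symm
  simp only [Pi.sub_apply]
  have hE : Real.exp (-(μ * t / 2)) * Real.exp (-(μ * t / 2)) = Real.exp (-(μ * t)) := by
    rw [← Real.exp_add]; ring_nf
  have hc : Real.cos (Real.sqrt 3 * μ * t) = 1 - 2 * Real.sin (Real.sqrt 3 / 2 * μ * t) ^ 2 := by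
    have h2 : Real.sqrt 3 * μ * t = 2 * (Real.sqrt 3 / 2 * μ * t) := by ring
    rw [h2, Real.cos_two_mul, Real.cos_sq']; ring
  have hs3 : Real.sqrt 3 * Real.sqrt 3 = 3 := Real.mul_self_sqrt (by norm_num)
  rw [hc]
  linear_combination (μ^6 * Real.sin (Real.sqrt 3/2*μ*t)^2) * hE +
    Real.exp (-(μ*t)) * (μ^6/8) * (1 - 2*Real.sin (Real.sqrt 3/2*μ*t)^2) * hs3

lemma aux_tendsto {μ : ℝ} (hμ : 0 < μ) :
    Tendsto (fun t : ℝ => μ ^ 5 / 2 * (Real.exp (-(μ * t)) *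
        (-1 + Real.cos (Real.sqrt 3 * μ * t) / 4 - Real.sqrt 3 * Real.sin (Real.sqrt 3 * μ * t) / 4)))
      atTop (nhds 0) := by
  have hexp : Tendsto (fun t : ℝ => Real.exp (-(μ * t))) atTop (nhds 0) := by
    apply Real.tendsto_exp_atBot.comp
    exact tendsto_neg_atTop_atBot.comp (tendsto_id.const_mul_atTop hμ)
  have hbd : Tendsto (fun t : ℝ => μ ^ 5 / 2 * ((1 + 1/4 + Real.sqrt 3 / 4) * Real.exp (-(μ * t))))
      atTop (nhds 0) := by
    simpa using (hexp.const_mul (μ ^ 5 / 2 * (1 + 1/4 + Real.sqrt 3 / 4))).congr (by intro t; ring)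
  apply squeeze_zero_norm _ hbd
  intro t
  have h1 : |Real.cos (Real.sqrt 3 * μ * t)| ≤ 1 := Real.abs_cos_le_one _
  have h2 : |Real.sin (Real.sqrt 3 * μ * t)| ≤ 1 := Real.abs_sin_le_one _
  have h3 : (0:ℝ) ≤ Real.sqrt 3 := Real.sqrt_nonneg 3
  have he : (0:ℝ) < Real.exp (-(μ * t)) := Real.exp_pos _
  rw [Real.norm_eq_abs, abs_mul, abs_mul, abs_of_nonneg (by positivity : (0:ℝ) ≤ μ ^ 5 / 2),
    abs_of_pos he]
  have : |(-1 + Real.cos (Real.sqrt 3 * μ * t) / 4 - Real.sqrt 3 * Real.sin (Real.sqrt 3 * μ * t) / 4)|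
      ≤ 1 + 1/4 + Real.sqrt 3 / 4 := by
    obtain ⟨hc1, hc2⟩ := abs_le.mp h1
    obtain ⟨hs1, hs2⟩ := abs_le.mp h2
    rw [abs_le]
    constructor <;>
      nlinarith [mul_nonneg h3 (by linarith : (0:ℝ) ≤ 1 - Real.sin (Real.sqrt 3 * μ * t)),
        mul_nonneg h3 (by linarith : (0:ℝ) ≤ 1 + Real.sin (Real.sqrt 3 * μ * t))]
  calc μ ^ 5 / 2 * (Real.exp (-(μ * t)) * |_|) ≤ μ ^ 5 / 2 * (Real.exp (-(μ * t)) * (1 + 1/4 + Real.sqrt 3 / 4)) := by gcongr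
    _ = μ ^ 5 / 2 * ((1 + 1/4 + Real.sqrt 3 / 4) * Real.exp (-(μ * t))) := by ring

lemma aux_integral {μ : ℝ} (hμ : 0 < μ) :
    IntegrableOn (fun t : ℝ => (μ ^ 3 * Real.exp (-(μ * t / 2)) * Real.sin (Real.sqrt 3 / 2 * μ * t)) ^ 2) (Ioi 0) ∧
    ∫ t in Ioi (0:ℝ), (μ ^ 3 * Real.exp (-(μ * t / 2)) * Real.sin (Real.sqrt 3 / 2 * μ * t)) ^ 2
      = 3 / 8 * μ ^ 5 := by
  have hderiv : ∀ t ∈ Ici (0:ℝ), HasDerivAt (fun t : ℝ => μ ^ 5 / 2 * (Real.exp (-(μ * t)) *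
        (-1 + Real.cos (Real.sqrt 3 * μ * t) / 4 - Real.sqrt 3 * Real.sin (Real.sqrt 3 * μ * t) / 4)))
      ((μ ^ 3 * Real.exp (-(μ * t / 2)) * Real.sin (Real.sqrt 3 / 2 * μ * t)) ^ 2) t :=
    fun t _ => aux_deriv μ t
  have hpos : ∀ t ∈ Ioi (0:ℝ), (0:ℝ) ≤ (μ ^ 3 * Real.exp (-(μ * t / 2)) * Real.sin (Real.sqrt 3 / 2 * μ * t)) ^ 2 :=
    fun t _ => sq_nonneg _
  have htend := aux_tendsto hμ
  refine ⟨integrableOn_Ioi_deriv_of_nonneg' hderiv hpos htend, ?_⟩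
  rw [integral_Ioi_of_hasDerivAt_of_nonneg' hderiv hpos htend]
  norm_num [Real.exp_zero, Real.cos_zero, Real.sin_zero]
  ring

lemma aux_G {μ₀ r : ℝ} (hμ₀ : 0 < μ₀) (hr : μ₀ ≤ r) :
    ∫ t in Ioi (0:ℝ),
        (r ^ 3 * Real.exp (-(r * max t 0 / 2)) * Real.sin (Real.sqrt 3 / 2 * r * max t 0)) ^ 2
      = 3 / 8 * (r ^ ((5:ℝ)/2)) ^ 2 := by
  have hrpos : 0 < r := lt_of_lt_of_le hμ₀ hr
  have h1 : ∫ t in Ioi (0:ℝ),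
        (r ^ 3 * Real.exp (-(r * max t 0 / 2)) * Real.sin (Real.sqrt 3 / 2 * r * max t 0)) ^ 2
      = ∫ t in Ioi (0:ℝ),
        (r ^ 3 * Real.exp (-(r * t / 2)) * Real.sin (Real.sqrt 3 / 2 * r * t)) ^ 2 := by
    refine setIntegral_congr_fun measurableSet_Ioi fun t ht => ?_
    simp only [max_eq_left (le_of_lt (mem_Ioi.mp ht))]
  rw [h1, (aux_integral hrpos).2]
  have h2 : (r ^ ((5:ℝ)/2)) ^ (2:ℕ) = r ^ (5:ℕ) := by
    rw [← Real.rpow_natCast (r ^ ((5:ℝ)/2)) 2, ← Real.rpow_mul hrpos.le,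
      ← Real.rpow_natCast r 5]
    norm_num
  rw [h2]

variable {H : Type*} [NormedAddCommGroup H] [InnerProductSpace ℂ H] [CompleteSpace H]

lemma aux_spec [Nontrivial H] (A : H →L[ℂ] H) (μ₀ : ℝ)
    (hpos : ∀ x : H, μ₀ * ‖x‖ ^ 2 ≤ (inner ℂ (A x) x : ℂ).re) :
    spectrum ℝ A ⊆ Icc μ₀ ‖A‖ := by
  intro μ hμ
  constructor
  · by_contra h
    push_neg at h
    rw [spectrum.mem_iff] at hμ
    apply hμ
    refine isUnit_of_forall_le_norm_inner_map _ (c := ⟨μ₀ - μ, by linarith⟩)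
      (by exact_mod_cast sub_pos.mpr h) fun x => ?_
    have key : (μ₀ - μ) * ‖x‖ ^ 2 ≤ ((inner ℂ ((A - algebraMap ℝ (H →L[ℂ] H) μ) x) x : ℂ)).re := by
      have : (inner ℂ ((algebraMap ℝ (H →L[ℂ] H) μ) x) x : ℂ).re = μ * ‖x‖ ^ 2 := by
        rw [Algebra.algebraMap_eq_smul_one, ← algebraMap_smul ℂ μ (1 : (H →L[ℂ] H)), coe_smul',
          Pi.smul_apply, ContinuousLinearMap.one_apply, inner_smul_left]
        simp [Complex.mul_re, inner_self_im, Complex.conj_ofReal]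
        exact Or.inl (by rw [← Complex.ofReal_pow, Complex.ofReal_re])
      rw [ContinuousLinearMap.sub_apply, inner_sub_left, Complex.sub_re, this]
      have := hpos x
      linarith
    have hnorm : ((inner ℂ ((A - algebraMap ℝ (H →L[ℂ] H) μ) x) x : ℂ)).re
        ≤ ‖(inner ℂ ((algebraMap ℝ (H →L[ℂ] H) μ - A) x) x : ℂ)‖ := by
      have : (algebraMap ℝ (H →L[ℂ] H) μ - A) = -(A - algebraMap ℝ (H →L[ℂ] H) μ) :=
        (neg_sub _ _).symm
      rw [this]
      simp only [ContinuousLinearMap.neg_apply, inner_neg_left, norm_neg]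
      exact Complex.re_le_norm _
    calc ‖x‖ ^ 2 * (⟨μ₀ - μ, by linarith⟩ : NNReal) = (μ₀ - μ) * ‖x‖ ^ 2 := by
          simp [mul_comm]
      _ ≤ _ := key.trans hnorm
  · calc μ ≤ ‖μ‖ := le_abs_self μ
      _ ≤ ‖A‖ := spectrum.norm_le_norm_of_mem hμ

lemma aux_norm_sq (A : H →L[ℂ] H) (hA : IsSelfAdjoint A) (f : ℝ → ℝ)
    (hf : ContinuousOn f (spectrum ℝ A)) (x : H) :
    ‖cfc f A x‖ ^ 2 = RCLike.re (inner ℂ x (cfc (fun μ => f μ ^ 2) A x) : ℂ) := by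
  have hB : IsSelfAdjoint (cfc f A) := cfc_predicate f A
  have h2 : cfc (fun μ => f μ ^ 2) A = cfc f A * cfc f A := by
    rw [← cfc_mul f f A hf hf]
    exact cfc_congr fun μ _ => sq (f μ)
  rw [h2, ContinuousLinearMap.mul_apply, ← inner_self_eq_norm_sq (𝕜 := ℂ) (cfc f A x)]
  congr 1
  calc (inner ℂ (cfc f A x) (cfc f A x) : ℂ)
      = inner ℂ ((ContinuousLinearMap.adjoint (cfc f A)) x) (cfc f A x) := by rw [hB.adjoint_eq]
    _ = inner ℂ x (cfc f A (cfc f A x)) := ContinuousLinearMap.adjoint_inner_left _ _ _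

lemma aux_swap (A : H →L[ℂ] H) (hA : IsSelfAdjoint A) (g : ℝ → ℝ → ℝ) (bound : ℝ → ℝ)
    (ν : Measure ℝ)
    (huncurry : Continuous (Function.uncurry fun t => (spectrum ℝ A).restrict (g t)))
    (hbound : ∀ t : ℝ, ∀ μ ∈ spectrum ℝ A, ‖g t μ‖ ≤ ‖bound t‖)
    (hSG : ∀ t, ContinuousOn (g t) (spectrum ℝ A))
    (hbound_int : Integrable bound ν) (x : H) :
    Integrable (fun t => RCLike.re (inner ℂ x (cfc (g t) A x) : ℂ)) ν ∧
    ∫ t, RCLike.re (inner ℂ x (cfc (g t) A x) : ℂ) ∂ν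
      = RCLike.re (inner ℂ x (cfc (fun r => ∫ t, g t r ∂ν) A x) : ℂ) := by
  have hBint : Integrable (fun t => cfc (g t) A) ν := by
    set K : C(ℝ × (spectrum ℝ A), ℝ) :=
      ⟨Function.uncurry fun t => (spectrum ℝ A).restrict (g t), huncurry⟩ with hK
    set fc : ℝ → C((spectrum ℝ A : Set ℝ), ℝ) := fun t => ContinuousMap.curry K t with hfc
    have hfc_int : Integrable fc ν := by
      refine ⟨(ContinuousMap.curry K).continuous.aestronglyMeasurable, ?_⟩
      refine hbound_int.hasFiniteIntegral.mono (Eventually.of_forall fun t => ?_)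
      rw [ContinuousMap.norm_le _ (norm_nonneg (bound t))]
      exact fun z => hbound t z.1 z.2
    have hfc_eq : ∀ t, cfc (g t) A = cfcL (a := A) hA (fc t) := by
      intro t
      rw [cfc_apply (g t) A hA (hSG t)]
      rfl
    have := (cfcL (a := A) hA).integrable_comp hfc_int
    exact this.congr (ae_of_all _ fun t => (hfc_eq t).symm)
  have hswap : cfc (fun r => ∫ t, g t r ∂ν) A = ∫ t, cfc (g t) A ∂ν :=
    cfc_integral g (fun t => ‖bound t‖) A (by
      rw [continuousOn_iff_continuous_restrict]
      exact huncurry.comp ((continuous_subtype_val.fst).prodMk (continuous_subtype_val.snd.subtype_mk fun q => (Set.mem_prod.mp q.2).2)))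
      (ae_of_all _ hbound) hbound_int.norm.hasFiniteIntegral hA
  have hBx : Integrable (fun t => cfc (g t) A x) ν :=
    (ContinuousLinearMap.apply ℂ H x).integrable_comp hBint
  have hInner : Integrable (fun t => (inner ℂ x (cfc (g t) A x) : ℂ)) ν :=
    (innerSL ℂ x).integrable_comp hBx
  refine ⟨hInner.re, ?_⟩
  rw [integral_re hInner, integral_inner hBx x, hswap,
    ContinuousLinearMap.integral_apply hBint x]

end Aux

/-- Let `A` be a bounded self-adjoint positive-definite operator on a complex Hilbert
space `H`. Then for every `x ∈ H`,
`∫₀^∞ ‖cfc(μ ↦ μ³ e^{−μt/2} sin((√3/2)μt))(A) x‖² dt ≤ (3/8) ‖A^{5/2} x‖²`. -/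
theorem stmt_3 {H : Type*} [NormedAddCommGroup H] [InnerProductSpace ℂ H] [CompleteSpace H]
    (A : H →L[ℂ] H) (hA : IsSelfAdjoint A) (μ₀ : ℝ) (hμ₀ : 0 < μ₀)
    (hpos : ∀ x : H, μ₀ * ‖x‖ ^ 2 ≤ (inner ℂ (A x) x : ℂ).re)
    (x : H) :
    ∫⁻ t in Ioi (0 : ℝ),
        ‖cfc (fun μ : ℝ => μ ^ 3 * Real.exp (-(μ * t / 2)) *
            Real.sin (Real.sqrt 3 / 2 * μ * t)) A x‖₊ ^ 2
      ≤ ENNReal.ofReal ((3 / 8) * ‖cfc (fun μ : ℝ => μ ^ ((5 : ℝ) / 2)) A x‖ ^ 2) := by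
  rcases subsingleton_or_nontrivial H with hsub | hnt
  · have hz : ∀ t : ℝ, (‖cfc (fun μ : ℝ => μ ^ 3 * Real.exp (-(μ * t / 2)) *
        Real.sin (Real.sqrt 3 / 2 * μ * t)) A x‖₊ : ℝ≥0∞) ^ 2 = 0 := by
      intro t
      rw [Subsingleton.elim (cfc (fun μ : ℝ => μ ^ 3 * Real.exp (-(μ * t / 2)) *
        Real.sin (Real.sqrt 3 / 2 * μ * t)) A x) 0]
      simp
    calc ∫⁻ t in Ioi (0 : ℝ), (‖cfc (fun μ : ℝ => μ ^ 3 * Real.exp (-(μ * t / 2)) *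
            Real.sin (Real.sqrt 3 / 2 * μ * t)) A x‖₊ : ℝ≥0∞) ^ 2
        = ∫⁻ _ in Ioi (0 : ℝ), 0 := by
          apply lintegral_congr fun t => hz t
      _ = 0 := lintegral_zero
      _ ≤ _ := zero_le
  · have hspec := aux_spec A μ₀ hpos
    set ν : Measure ℝ := volume.restrict (Ioi 0) with hν
    set g : ℝ → ℝ → ℝ := fun t μ =>
        (μ ^ 3 * Real.exp (-(μ * max t 0 / 2)) * Real.sin (Real.sqrt 3 / 2 * μ * max t 0)) ^ 2
      with hg
    set bound : ℝ → ℝ := fun t => ‖A‖ ^ 6 * Real.exp (-(μ₀ * max t 0)) with hbound_def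
    have hgc : Continuous fun p : ℝ × ℝ => g p.1 p.2 := by rw [hg]; fun_prop
    have huncurry : Continuous (Function.uncurry fun t => (spectrum ℝ A).restrict (g t)) := by
      have : (Function.uncurry fun t => (spectrum ℝ A).restrict (g t))
          = (fun p : ℝ × ℝ => g p.1 p.2) ∘ (fun q : ℝ × (spectrum ℝ A) => (q.1, (q.2 : ℝ))) := rfl
      rw [this]
      exact hgc.comp (by fun_prop)
    have hSG : ∀ t, ContinuousOn (g t) (spectrum ℝ A) := by
      intro t
      apply Continuous.continuousOn
      rw [hg]
      fun_prop
    have hbound : ∀ t : ℝ, ∀ μ ∈ spectrum ℝ A, ‖g t μ‖ ≤ ‖bound t‖ := by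
      intro t μ hμ
      obtain ⟨h1, h2⟩ := hspec hμ
      have hμpos : 0 < μ := lt_of_lt_of_le hμ₀ h1
      have hm : (0:ℝ) ≤ max t 0 := le_max_right t 0
      have hE : Real.exp (-(μ * max t 0 / 2)) * Real.exp (-(μ * max t 0 / 2))
          = Real.exp (-(μ * max t 0)) := by rw [← Real.exp_add]; ring_nf
      have hgval : g t μ = μ ^ 6 * Real.exp (-(μ * max t 0)) *
          Real.sin (Real.sqrt 3 / 2 * μ * max t 0) ^ 2 := by
        rw [hg]; simp only; rw [← hE]; ring
      rw [Real.norm_eq_abs, Real.norm_eq_abs, abs_of_nonneg (by rw [hg]; exact sq_nonneg _),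
        abs_of_nonneg (by positivity), hgval]
      calc μ ^ 6 * Real.exp (-(μ * max t 0)) * Real.sin (Real.sqrt 3 / 2 * μ * max t 0) ^ 2
          ≤ μ ^ 6 * Real.exp (-(μ * max t 0)) * 1 := by
            gcongr
            exact Real.sin_sq_le_one _
        _ ≤ ‖A‖ ^ 6 * Real.exp (-(μ₀ * max t 0)) * 1 := by
            gcongr <;>
              first
                | exact hμpos.le
                | exact h2
                | exact Real.exp_le_exp.mpr (by nlinarith)
        _ = bound t := by rw [hbound_def]; ring
    have hbound_int : Integrable bound ν := by
      rw [hν]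
      have base : IntegrableOn (fun t : ℝ => Real.exp (-μ₀ * t)) (Ioi 0) :=
        exp_neg_integrableOn_Ioi 0 hμ₀
      have base2 : IntegrableOn (fun t : ℝ => ‖A‖ ^ 6 * Real.exp (-μ₀ * t)) (Ioi 0) :=
        base.const_mul _
      refine IntegrableOn.congr_fun base2 ?_ measurableSet_Ioi
      intro t ht
      rw [hbound_def]
      simp only [max_eq_left (le_of_lt (mem_Ioi.mp ht)), neg_mul]
    obtain ⟨hIntφ, hswapval⟩ := aux_swap A hA g bound ν huncurry hbound hSG hbound_int x
    -- pointwise identification of the integrand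
    have hφeq : ∀ t : ℝ, RCLike.re (inner ℂ x (cfc (g t) A x) : ℂ)
        = ‖cfc (fun μ : ℝ => μ ^ 3 * Real.exp (-(μ * max t 0 / 2)) *
            Real.sin (Real.sqrt 3 / 2 * μ * max t 0)) A x‖ ^ 2 := by
      intro t
      rw [hg]
      exact (aux_norm_sq A hA _ (Continuous.continuousOn (by fun_prop)) x).symm
    have hφnonneg : ∀ t : ℝ, 0 ≤ RCLike.re (inner ℂ x (cfc (g t) A x) : ℂ) := fun t => by
      rw [hφeq t]; positivity
    -- value of the swapped integral
    have hC2cont : ContinuousOn (fun r : ℝ => (r ^ ((5:ℝ)/2)) ^ 2) (spectrum ℝ A) :=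
      ((Real.continuous_rpow_const (by norm_num)).pow 2).continuousOn
    have hCcont : ContinuousOn (fun r : ℝ => r ^ ((5:ℝ)/2)) (spectrum ℝ A) :=
      (Real.continuous_rpow_const (by norm_num)).continuousOn
    have hGc : cfc (fun r => ∫ t, g t r ∂ν) A
        = cfc (fun r : ℝ => 3 / 8 * (r ^ ((5:ℝ)/2)) ^ 2) A := by
      refine cfc_congr fun r hr => ?_
      obtain ⟨h1, h2⟩ := hspec hr
      rw [hg, hν]
      exact aux_G hμ₀ h1
    have hconst : cfc (fun r : ℝ => 3 / 8 * (r ^ ((5:ℝ)/2)) ^ 2) A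
        = (3 / 8 : ℝ) • cfc (fun r : ℝ => (r ^ ((5:ℝ)/2)) ^ 2) A :=
      cfc_const_mul _ _ _ hC2cont
    have hCx : ‖cfc (fun μ : ℝ => μ ^ ((5:ℝ)/2)) A x‖ ^ 2
        = RCLike.re (inner ℂ x (cfc (fun μ : ℝ => (μ ^ ((5:ℝ)/2)) ^ 2) A x) : ℂ) :=
      aux_norm_sq A hA _ hCcont x
    have hfinal : RCLike.re (inner ℂ x (cfc (fun r => ∫ t, g t r ∂ν) A x) : ℂ)
        = 3 / 8 * ‖cfc (fun μ : ℝ => μ ^ ((5:ℝ)/2)) A x‖ ^ 2 := by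
      rw [hGc, hconst, ContinuousLinearMap.smul_apply,
        RCLike.real_smul_eq_coe_smul (K := ℂ), inner_smul_right, re_ofReal_mul, hCx]
    calc ∫⁻ t in Ioi (0 : ℝ), (‖cfc (fun μ : ℝ => μ ^ 3 * Real.exp (-(μ * t / 2)) *
            Real.sin (Real.sqrt 3 / 2 * μ * t)) A x‖₊ : ℝ≥0∞) ^ 2
        = ∫⁻ t in Ioi (0 : ℝ), ENNReal.ofReal (RCLike.re (inner ℂ x (cfc (g t) A x) : ℂ)) := by
          refine setLIntegral_congr_fun measurableSet_Ioi (fun t ht => ?_)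
          have hmax : max t 0 = t := max_eq_left (le_of_lt (mem_Ioi.mp ht))
          rw [hφeq t, hmax, ENNReal.ofReal_pow (norm_nonneg _), ofReal_norm, enorm_eq_nnnorm]
      _ = ENNReal.ofReal (∫ t, RCLike.re (inner ℂ x (cfc (g t) A x) : ℂ) ∂ν) := by
          rw [hν]
          exact (ofReal_integral_eq_lintegral_ofReal hIntφ (ae_of_all _ hφnonneg)).symm
      _ = ENNReal.ofReal (3 / 8 * ‖cfc (fun μ : ℝ => μ ^ ((5:ℝ)/2)) A x‖ ^ 2) := by
          rw [hswapval, hfinal]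
      _ ≤ _ := le_refl _
end

section
/- Assume κ < 1. If u is admissible, u'''(t) = A³u(t) for almost every t > 0, u(0) = 0, and u'(0) = Ku, then u(t) = 0 for all t ≥ 0. -/
open MeasureTheory Set

noncomputable section

/-- The `L²(ℝ₊;H)` norm of a function `v : ℝ → H` (restricted to `(0,∞)`):
`‖v‖_{L²} = (∫₀^∞ ‖v(t)‖² dt)^{1/2}`. -/
def L2norm {H : Type*} [NormedAddCommGroup H] (v : ℝ → H) : ℝ :=
  Real.sqrt (∫ t in Ioi (0 : ℝ), ‖v t‖ ^ 2)

/-- `A^γ`, the bounded operator obtained by applying the continuous functional calculus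
of `A` to the function `μ ↦ μ^γ`. -/
def Apow {H : Type*} [NormedAddCommGroup H] [InnerProductSpace ℂ H] [CompleteSpace H]
    (A : H →L[ℂ] H) (γ : ℝ) : H →L[ℂ] H :=
  cfc (fun μ : ℝ => μ ^ γ) A

/-- A function `u : ℝ → H`, thought of as defined on `[0,∞)`, is admissible (with
derivative witnesses `u'`, `u''`, `u'''`): `u` is twice continuously differentiable on
`[0,∞)`, `u''` is locally absolutely continuous with a.e. derivative `u'''` (expressed by
the fundamental theorem of calculus identity), and `u, u', u'', u'''` are all
square-integrable on `(0,∞)`. -/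
structure Admissible {H : Type*} [NormedAddCommGroup H] [InnerProductSpace ℂ H]
    (u u' u'' u''' : ℝ → H) : Prop where
  hasDeriv1 : ∀ t ∈ Ici (0 : ℝ), HasDerivWithinAt u (u' t) (Ici 0) t
  hasDeriv2 : ∀ t ∈ Ici (0 : ℝ), HasDerivWithinAt u' (u'' t) (Ici 0) t
  cont2 : ContinuousOn u'' (Ici 0)
  locInt3 : LocallyIntegrableOn u''' (Ici 0)
  fund : ∀ t ∈ Ici (0 : ℝ), u'' t = u'' 0 + ∫ s in Ioc (0 : ℝ) t, u''' s
  sq0 : MemLp u 2 (volume.restrict (Ioi 0))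
  sq1 : MemLp u' 2 (volume.restrict (Ioi 0))
  sq2 : MemLp u'' 2 (volume.restrict (Ioi 0))
  sq3 : MemLp u''' 2 (volume.restrict (Ioi 0))

/-- The norm `‖u‖_W = (‖u'''‖²_{L²} + ‖A³u‖²_{L²})^{1/2}`. -/
def Wnorm {H : Type*} [NormedAddCommGroup H] [InnerProductSpace ℂ H]
    (A : H →L[ℂ] H) (u u''' : ℝ → H) : ℝ :=
  Real.sqrt ((∫ t in Ioi (0 : ℝ), ‖u''' t‖ ^ 2) + ∫ t in Ioi (0 : ℝ), ‖(A ^ 3) (u t)‖ ^ 2)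

end

section Aux
open Filter Topology ContinuousLinearMap
open scoped InnerProductSpace ComplexConjugate ENNReal NNReal

variable {H : Type*} [NormedAddCommGroup H] [InnerProductSpace ℂ H] [CompleteSpace H]

lemma aux_apow_sq {A : H →L[ℂ] H} (hA : IsSelfAdjoint A)
    (hspec : ∀ μ ∈ spectrum ℝ A, 0 ≤ μ) (x : H) :
    ‖Apow A (3/2) x‖ ^ 2 = (⟪(A ^ 3) x, x⟫_ℂ).re := by
  have hcont : ContinuousOn (fun μ : ℝ => μ ^ (3/2 : ℝ)) (spectrum ℝ A) :=
    (Real.continuous_rpow_const (by norm_num)).continuousOn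
  have hmul : Apow A (3/2) * Apow A (3/2) = A ^ 3 := by
    rw [Apow, ← cfc_mul _ _ A hcont hcont, ← cfc_pow_id A 3 (R := ℝ) hA]
    apply cfc_congr
    intro μ hμ
    have h0 : (0:ℝ) ≤ μ := hspec μ hμ
    show μ ^ ((3:ℝ)/2) * μ ^ ((3:ℝ)/2) = μ ^ (3:ℕ)
    rw [← Real.rpow_natCast μ 3, ← Real.rpow_add' h0 (by norm_num)]
    norm_num
  have hC : IsSelfAdjoint (Apow A (3/2)) := cfc_predicate _ A
  have h1 : ⟪Apow A (3/2) x, Apow A (3/2) x⟫_ℂ = ⟪x, (A^3) x⟫_ℂ := by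
    rw [← ContinuousLinearMap.adjoint_inner_right, hC.adjoint_eq,
      ← ContinuousLinearMap.mul_apply, hmul]
  have h2 : (⟪Apow A (3/2) x, Apow A (3/2) x⟫_ℂ).re = ‖Apow A (3/2) x‖ ^ 2 :=
    inner_self_eq_norm_sq (𝕜 := ℂ) _
  rw [← h2, h1, show ((⟪x, (A^3) x⟫_ℂ).re = (⟪(A^3) x, x⟫_ℂ).re) from inner_re_symm (𝕜 := ℂ) _ _]

lemma aux_seq (g : ℝ → ℝ) (hg : Integrable g (volume.restrict (Ioi 0)))
    (hg0 : ∀ t, 0 ≤ g t) :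
    ∃ T : ℕ → ℝ, Tendsto T atTop atTop ∧ (∀ n, 0 ≤ T n) ∧
      Tendsto (fun n => g (T n)) atTop (nhds 0) := by
  have key : ∀ n : ℕ, ∃ t : ℝ, (n : ℝ) < t ∧ g t < 1 / (n + 1) := by
    intro n
    by_contra hcon
    push_neg at hcon
    have hb : ∀ t ∈ Ioi (max (n:ℝ) 0), ENNReal.ofReal (1/(n+1:ℝ)) ≤ ‖g t‖₊ := by
      intro t ht
      have h1 : 1/(n+1:ℝ) ≤ g t := hcon t (lt_of_le_of_lt (le_max_left _ _) ht)
      calc ENNReal.ofReal (1/(n+1:ℝ)) ≤ ENNReal.ofReal (g t) := ENNReal.ofReal_le_ofReal h1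
        _ = ‖g t‖₊ := (Real.enorm_eq_ofReal (hg0 t)).symm
    have hinf : (∫⁻ t in Ioi (0:ℝ), ‖g t‖₊) = ⊤ := by
      refine top_unique ?_
      calc (⊤ : ℝ≥0∞) = ENNReal.ofReal (1/(n+1:ℝ)) * volume (Ioi (max (n:ℝ) 0)) := by
            rw [Real.volume_Ioi, ENNReal.mul_top]
            simp [ENNReal.ofReal_eq_zero]
            positivity
        _ = ∫⁻ t in Ioi (max (n:ℝ) 0), ENNReal.ofReal (1/(n+1:ℝ)) := by
            rw [setLIntegral_const]
        _ ≤ ∫⁻ t in Ioi (max (n:ℝ) 0), ‖g t‖₊ := setLIntegral_mono' measurableSet_Ioi hb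
        _ ≤ ∫⁻ t in Ioi (0:ℝ), ‖g t‖₊ := by
            apply lintegral_mono_set
            exact Ioi_subset_Ioi (le_max_right _ _)
    exact absurd hinf (by exact hg.2.ne)
  choose T hT1 hT2 using key
  refine ⟨T, ?_, fun n => le_trans (Nat.cast_nonneg n) (hT1 n).le, ?_⟩
  · exact tendsto_atTop_mono (fun n => (hT1 n).le) tendsto_natCast_atTop_atTop
  · refine squeeze_zero (fun n => hg0 _) (fun n => (hT2 n).le) ?_
    exact tendsto_one_div_add_atTop_nhds_zero_nat

lemma aux_identity {B : H →L[ℂ] H} (hB : IsSelfAdjoint B)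
    {u u' u'' u''' : ℝ → H} (hu : Admissible u u' u'' u''') (h0 : u 0 = 0)
    {T : ℝ} (hT : 0 ≤ T) :
    ∫ t in (0:ℝ)..T, (⟪u''' t, B (u t)⟫_ℂ).re
      = (⟪u'' T, B (u T)⟫_ℂ).re
        - (1/2) * (⟪u' T, B (u' T)⟫_ℂ).re + (1/2) * (⟪u' 0, B (u' 0)⟫_ℂ).re := by
  have hTmem : T ∈ Ici (0:ℝ) := hT
  have hcu : ContinuousOn u (Ici 0) := fun t ht => (hu.hasDeriv1 t ht).continuousWithinAt
  have hcu' : ContinuousOn u' (Ici 0) := fun t ht => (hu.hasDeriv2 t ht).continuousWithinAt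
  have hIcc3 : IntegrableOn u''' (Icc 0 T) volume :=
    hu.locInt3.integrableOn_compact_subset (fun r hr => hr.1) isCompact_Icc
  have hII3 : ∀ s t : ℝ, 0 ≤ s → s ≤ t → t ≤ T → IntervalIntegrable u''' volume s t := by
    intro s t hs hst htT
    rw [intervalIntegrable_iff_integrableOn_Ioc_of_le hst]
    exact hIcc3.mono_set (fun r hr => ⟨le_trans hs hr.1.le, le_trans hr.2 htT⟩)
  have hIIu' : ∀ t : ℝ, 0 ≤ t → IntervalIntegrable u' volume 0 t := by
    intro t ht
    apply ContinuousOn.intervalIntegrable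
    rw [uIcc_of_le ht]
    exact hcu'.mono (fun r hr => hr.1)
  -- FTC for u
  have hprim : ∀ b ∈ Icc (0:ℝ) T, ∫ s in (0:ℝ)..b, u' s = u b := by
    intro b hb
    rw [intervalIntegral.integral_eq_sub_of_hasDeriv_right_of_le hb.1
      (hcu.mono (fun r hr => hr.1))
      (fun x hx => ((hu.hasDeriv1 x hx.1.le).mono (fun y (hy : x < y) => le_trans hx.1.le hy.le)))
      (hIIu' b hb.1), h0, sub_zero]
  -- FTC for u'' from fund
  have hprim3 : ∀ s ∈ Icc (0:ℝ) T, ∫ r in s..T, u''' r = u'' T - u'' s := by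
    intro s hs
    have e1 : ∫ r in (0:ℝ)..T, u''' r = u'' T - u'' 0 := by
      rw [intervalIntegral.integral_of_le hT]
      conv_lhs => rw [show (∫ r in Ioc (0:ℝ) T, u''' r) = (u'' 0 + ∫ r in Ioc (0:ℝ) T, u''' r) - u'' 0 by abel, ← hu.fund T hTmem]
    have e2 : ∫ r in (0:ℝ)..s, u''' r = u'' s - u'' 0 := by
      rw [intervalIntegral.integral_of_le hs.1]
      conv_lhs => rw [show (∫ r in Ioc (0:ℝ) s, u''' r) = (u'' 0 + ∫ r in Ioc (0:ℝ) s, u''' r) - u'' 0 by abel, ← hu.fund s hs.1]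
    have e3 : (∫ r in (0:ℝ)..s, u''' r) + ∫ r in s..T, u''' r = ∫ r in (0:ℝ)..T, u''' r :=
      intervalIntegral.integral_add_adjacent_intervals (hII3 0 s le_rfl hs.1 hs.2)
        (hII3 s T hs.1 hs.2 le_rfl)
    rw [e1, e2] at e3
    have e4 : ∫ r in s..T, u''' r = (u'' T - u'' 0) - (u'' s - u'' 0) := by
      rw [← e3]; abel
    rw [e4]; abel
  -- helper: pull a real-CLM out of interval integrals
  have pull1 : ∀ (c : H) (f : ℝ → H) (a b : ℝ), IntervalIntegrable f volume a b →
      ∫ s in a..b, (⟪c, B (f s)⟫_ℂ).re = (⟪c, B (∫ s in a..b, f s)⟫_ℂ).re := by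
    intro c f a b hf
    have h := (Complex.reCLM.comp (((innerSL ℂ c).comp B).restrictScalars ℝ)).intervalIntegral_comp_comm hf
    simpa [ContinuousLinearMap.comp_apply] using h
  have pull2 : ∀ (c : H) (f : ℝ → H) (a b : ℝ), IntervalIntegrable f volume a b →
      ∫ s in a..b, (⟪c, f s⟫_ℂ).re = (⟪c, ∫ s in a..b, f s⟫_ℂ).re := by
    intro c f a b hf
    have h := (Complex.reCLM.comp ((innerSL ℂ c).restrictScalars ℝ)).intervalIntegral_comp_comm hf
    simpa [ContinuousLinearMap.comp_apply] using h
  -- second integration by parts (FTC for the inner product of u')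
  have h'mIcc : ContinuousOn u' (Icc 0 T) := hcu'.mono (fun r hr => hr.1)
  have h''mIcc : ContinuousOn u'' (Icc 0 T) := hu.cont2.mono (fun r hr => hr.1)
  have hq : ∫ s in (0:ℝ)..T, (2 * (⟪u'' s, B (u' s)⟫_ℂ).re)
      = (⟪u' T, B (u' T)⟫_ℂ).re - (⟪u' 0, B (u' 0)⟫_ℂ).re := by
    have hcq : ContinuousOn (fun s => (⟪u' s, B (u' s)⟫_ℂ).re) (Icc 0 T) :=
      Complex.continuous_re.comp_continuousOn
        (ContinuousOn.inner h'mIcc (B.continuous.comp_continuousOn h'mIcc))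
    have hderiv : ∀ x ∈ Ioo (0:ℝ) T,
        HasDerivWithinAt (fun s => (⟪u' s, B (u' s)⟫_ℂ).re)
          (2 * (⟪u'' x, B (u' x)⟫_ℂ).re) (Ioi x) x := by
      intro x hx
      have hmono : Ioi x ⊆ Ici (0:ℝ) := fun y hy => le_trans hx.1.le (le_of_lt hy)
      have hd'' : HasDerivWithinAt u' (u'' x) (Ioi x) x := (hu.hasDeriv2 x hx.1.le).mono hmono
      have hdB0 : HasDerivWithinAt (⇑(B.restrictScalars ℝ) ∘ u') ((B.restrictScalars ℝ) (u'' x)) (Ioi x) x :=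
        (B.restrictScalars ℝ).hasFDerivAt.comp_hasDerivWithinAt x hd''
      have hdB : HasDerivWithinAt (fun s => B (u' s)) (B (u'' x)) (Ioi x) x := hdB0
      have hinner := HasDerivWithinAt.inner ℂ hd'' hdB
      have hre := Complex.reCLM.hasFDerivAt.comp_hasDerivWithinAt x hinner
      have heqd : (Complex.reCLM (⟪u' x, B (u'' x)⟫_ℂ + ⟪u'' x, B (u' x)⟫_ℂ))
          = 2 * (⟪u'' x, B (u' x)⟫_ℂ).re := by
        have hadj : ⟪u' x, B (u'' x)⟫_ℂ = (starRingEnd ℂ) (⟪u'' x, B (u' x)⟫_ℂ) := by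
          conv_lhs => rw [← hB.adjoint_eq]
          rw [ContinuousLinearMap.adjoint_inner_right, ← inner_conj_symm]
        rw [show (Complex.reCLM (⟪u' x, B (u'' x)⟫_ℂ + ⟪u'' x, B (u' x)⟫_ℂ))
            = (⟪u' x, B (u'' x)⟫_ℂ + ⟪u'' x, B (u' x)⟫_ℂ).re from rfl, hadj]
        rw [Complex.add_re, Complex.conj_re]
        ring
      rw [← heqd]
      exact hre
    have hint : IntervalIntegrable (fun s => 2 * (⟪u'' s, B (u' s)⟫_ℂ).re) volume 0 T := by
      apply ContinuousOn.intervalIntegrable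
      rw [uIcc_of_le hT]
      exact continuousOn_const.mul (Complex.continuous_re.comp_continuousOn
        (ContinuousOn.inner h''mIcc (B.continuous.comp_continuousOn h'mIcc)))
    exact intervalIntegral.integral_eq_sub_of_hasDeriv_right_of_le hT hcq hderiv hint
  -- Fubini setup
  obtain ⟨F, hFdef⟩ : ∃ F : ℝ × ℝ → ℝ,
      F = Set.indicator {q : ℝ × ℝ | q.2 ≤ q.1} (fun q => (⟪u''' q.1, B (u' q.2)⟫_ℂ).re) :=
    ⟨_, rfl⟩
  set μT := volume.restrict (Ioc (0:ℝ) T) with hμTdef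
  have h3int : IntegrableOn u''' (Ioc 0 T) volume := hIcc3.mono_set Ioc_subset_Icc_self
  have h3m : AEStronglyMeasurable u''' μT := h3int.aestronglyMeasurable
  have h'int : IntegrableOn u' (Ioc 0 T) volume :=
    (h'mIcc.integrableOn_Icc).mono_set Ioc_subset_Icc_self
  have h'm : AEStronglyMeasurable u' μT := h'int.aestronglyMeasurable
  have hFm : AEStronglyMeasurable F (μT.prod μT) := by
    rw [hFdef]
    apply AEStronglyMeasurable.indicator
    · exact Complex.continuous_re.comp_aestronglyMeasurable
        ((h3m.comp_fst).inner ((B.continuous.comp_aestronglyMeasurable h'm).comp_snd))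
    · exact measurableSet_le measurable_snd measurable_fst
  have hG : Integrable (fun p : ℝ × ℝ => ‖u''' p.1‖ * (‖B‖ * ‖u' p.2‖)) (μT.prod μT) :=
    Integrable.mul_prod h3int.norm (h'int.norm.const_mul _)
  have hFint : Integrable F (μT.prod μT) := by
    refine hG.mono' hFm (Filter.Eventually.of_forall fun p => ?_)
    calc ‖F p‖ ≤ ‖(⟪u''' p.1, B (u' p.2)⟫_ℂ).re‖ := by
          rw [hFdef]; exact norm_indicator_le_norm_self _ _
      _ ≤ ‖(⟪u''' p.1, B (u' p.2)⟫_ℂ)‖ := by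
          rw [Real.norm_eq_abs]; exact Complex.abs_re_le_norm _
      _ ≤ ‖u''' p.1‖ * ‖B (u' p.2)‖ := norm_inner_le_norm _ _
      _ ≤ ‖u''' p.1‖ * (‖B‖ * ‖u' p.2‖) :=
          mul_le_mul_of_nonneg_left (B.le_opNorm _) (norm_nonneg _)
  -- main computation
  have main : ∫ t in (0:ℝ)..T, (⟪u''' t, B (u t)⟫_ℂ).re
      = (⟪u'' T, B (u T)⟫_ℂ).re - ∫ s in (0:ℝ)..T, (⟪u'' s, B (u' s)⟫_ℂ).re := by
    have c1 : ∫ t in (0:ℝ)..T, (⟪u''' t, B (u t)⟫_ℂ).re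
        = ∫ t in Ioc (0:ℝ) T, ∫ s in Ioc (0:ℝ) T, F (t, s) := by
      rw [intervalIntegral.integral_of_le hT]
      refine setIntegral_congr_fun measurableSet_Ioc (fun t ht => ?_)
      calc (⟪u''' t, B (u t)⟫_ℂ).re
          = ∫ s in (0:ℝ)..t, (⟪u''' t, B (u' s)⟫_ℂ).re := by
            rw [pull1 (u''' t) u' 0 t (hIIu' t ht.1.le), hprim t ⟨ht.1.le, ht.2⟩]
        _ = ∫ s in Ioc (0:ℝ) t, (⟪u''' t, B (u' s)⟫_ℂ).re :=
            intervalIntegral.integral_of_le ht.1.le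
        _ = ∫ s in Ioc (0:ℝ) T ∩ Iic t, (⟪u''' t, B (u' s)⟫_ℂ).re := by
            rw [Ioc_inter_Iic, min_eq_right ht.2]
        _ = ∫ s in Ioc (0:ℝ) T, (Iic t).indicator (fun s => (⟪u''' t, B (u' s)⟫_ℂ).re) s :=
            (setIntegral_indicator measurableSet_Iic).symm
        _ = ∫ s in Ioc (0:ℝ) T, F (t, s) := by
            refine setIntegral_congr_fun measurableSet_Ioc (fun s hs => ?_)
            simp [hFdef, Set.indicator_apply, Set.mem_Iic, Set.mem_setOf_eq]
    have c2 : ∫ t in Ioc (0:ℝ) T, ∫ s in Ioc (0:ℝ) T, F (t, s)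
        = ∫ s in Ioc (0:ℝ) T, ∫ t in Ioc (0:ℝ) T, F (t, s) :=
      MeasureTheory.integral_integral_swap hFint
    have c3 : ∫ s in Ioc (0:ℝ) T, ∫ t in Ioc (0:ℝ) T, F (t, s)
        = ∫ s in Ioc (0:ℝ) T, (⟪u'' T - u'' s, B (u' s)⟫_ℂ).re := by
      refine setIntegral_congr_fun measurableSet_Ioc (fun s hs => ?_)
      calc ∫ t in Ioc (0:ℝ) T, F (t, s)
          = ∫ t in Ioc (0:ℝ) T, (Ici s).indicator (fun t => (⟪u''' t, B (u' s)⟫_ℂ).re) t := by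
            refine setIntegral_congr_fun measurableSet_Ioc (fun t ht => ?_)
            rw [hFdef]
            by_cases hst : s ≤ t
            · rw [Set.indicator_of_mem (by exact hst : (t, s) ∈ {q : ℝ × ℝ | q.2 ≤ q.1}),
                Set.indicator_of_mem (by exact hst)]
            · rw [Set.indicator_of_notMem (by exact hst : (t, s) ∉ {q : ℝ × ℝ | q.2 ≤ q.1}),
                Set.indicator_of_notMem (by exact hst)]
        _ = ∫ t in Ioc (0:ℝ) T ∩ Ici s, (⟪u''' t, B (u' s)⟫_ℂ).re :=
            setIntegral_indicator measurableSet_Ici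
        _ = ∫ t in Icc s T, (⟪u''' t, B (u' s)⟫_ℂ).re := by
            have hset : Ioc (0:ℝ) T ∩ Ici s = Icc s T := by
              ext r
              simp only [Set.mem_inter_iff, Set.mem_Ioc, Set.mem_Ici, Set.mem_Icc]
              constructor
              · rintro ⟨⟨_, h2⟩, h3⟩; exact ⟨h3, h2⟩
              · rintro ⟨h1, h2⟩; exact ⟨⟨lt_of_lt_of_le hs.1 h1, h2⟩, h1⟩
            rw [hset]
        _ = ∫ t in Ioc s T, (⟪u''' t, B (u' s)⟫_ℂ).re := integral_Icc_eq_integral_Ioc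
        _ = ∫ t in s..T, (⟪u''' t, B (u' s)⟫_ℂ).re :=
            (intervalIntegral.integral_of_le hs.2).symm
        _ = ∫ t in s..T, (⟪B (u' s), u''' t⟫_ℂ).re :=
            intervalIntegral.integral_congr (fun r _ => inner_re_symm (𝕜 := ℂ) _ _)
        _ = (⟪B (u' s), ∫ t in s..T, u''' t⟫_ℂ).re :=
            pull2 (B (u' s)) u''' s T (hII3 s T hs.1.le hs.2 le_rfl)
        _ = (⟪B (u' s), u'' T - u'' s⟫_ℂ).re := by rw [hprim3 s ⟨hs.1.le, hs.2⟩]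
        _ = (⟪u'' T - u'' s, B (u' s)⟫_ℂ).re := inner_re_symm (𝕜 := ℂ) _ _
    have c4 : ∫ s in Ioc (0:ℝ) T, (⟪u'' T - u'' s, B (u' s)⟫_ℂ).re
        = (∫ s in (0:ℝ)..T, (⟪u'' T, B (u' s)⟫_ℂ).re)
          - ∫ s in (0:ℝ)..T, (⟪u'' s, B (u' s)⟫_ℂ).re := by
      rw [← intervalIntegral.integral_of_le hT, ← intervalIntegral.integral_sub]
      · refine intervalIntegral.integral_congr (fun r _ => ?_)
        rw [inner_sub_left]
        simp [Complex.sub_re]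
      · apply ContinuousOn.intervalIntegrable
        rw [uIcc_of_le hT]
        exact Complex.continuous_re.comp_continuousOn
          (ContinuousOn.inner continuousOn_const (B.continuous.comp_continuousOn h'mIcc))
      · apply ContinuousOn.intervalIntegrable
        rw [uIcc_of_le hT]
        exact Complex.continuous_re.comp_continuousOn
          (ContinuousOn.inner h''mIcc (B.continuous.comp_continuousOn h'mIcc))
    have c5 : ∫ s in (0:ℝ)..T, (⟪u'' T, B (u' s)⟫_ℂ).re = (⟪u'' T, B (u T)⟫_ℂ).re := by
      rw [pull1 (u'' T) u' 0 T (hIIu' T hT), hprim T ⟨hT, le_rfl⟩]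
    rw [c1, c2, c3, c4, c5]
  have hq' : ∫ s in (0:ℝ)..T, (⟪u'' s, B (u' s)⟫_ℂ).re
      = (1/2) * ((⟪u' T, B (u' T)⟫_ℂ).re - (⟪u' 0, B (u' 0)⟫_ℂ).re) := by
    have h2 : ∫ s in (0:ℝ)..T, (2 * (⟪u'' s, B (u' s)⟫_ℂ).re)
        = 2 * ∫ s in (0:ℝ)..T, (⟪u'' s, B (u' s)⟫_ℂ).re :=
      intervalIntegral.integral_const_mul 2 _
    rw [h2] at hq
    linarith
  rw [main, hq']
  ring


end Aux

open scoped InnerProductSpace ENNReal NNReal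

/-- Assume `κ < 1`. If `u` is admissible, `u'''(t) = A³u(t)` for a.e. `t > 0`,
`u(0) = 0`, and `u'(0) = Ku`, then `u(t) = 0` for all `t ≥ 0`. -/
theorem stmt_5 {H : Type*} [NormedAddCommGroup H] [InnerProductSpace ℂ H] [CompleteSpace H]
    (A : H →L[ℂ] H) (hA : IsSelfAdjoint A) (μ₀ : ℝ) (hμ₀ : 0 < μ₀)
    (hpos : ∀ x : H, μ₀ * ‖x‖ ^ 2 ≤ (inner ℂ (A x) x : ℂ).re)
    (K : (ℝ → H) →ₗ[ℂ] H) (κ : ℝ) (hκ0 : 0 ≤ κ)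
    (hK : ∀ u u' u'' u''' : ℝ → H, Admissible u u' u'' u''' →
      ‖Apow A (3 / 2) (K u)‖ ≤ κ * Wnorm A u u''')
    (hκ1 : κ < 1)
    (u u' u'' u''' : ℝ → H) (hu : Admissible u u' u'' u''')
    (heq : ∀ᵐ t ∂(volume.restrict (Ioi 0)), u''' t = (A ^ 3) (u t))
    (h0 : u 0 = 0) (h1 : u' 0 = K u) :
    ∀ t ∈ Ici (0 : ℝ), u t = 0 := by
  have hB : IsSelfAdjoint (A ^ 3) := hA.pow 3
  have hcu : ContinuousOn u (Ici 0) := fun t ht => (hu.hasDeriv1 t ht).continuousWithinAt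
  -- positivity and spectrum
  have hApos : A.IsPositive := by
    refine ⟨hA.isSymmetric, fun x => ?_⟩
    rw [ContinuousLinearMap.reApplyInnerSelf_apply]
    have h2 : (0:ℝ) ≤ μ₀ * ‖x‖^2 := by positivity
    exact le_trans h2 (hpos x)
  have hspec : ∀ μ ∈ spectrum ℝ A, 0 ≤ μ :=
    fun μ hμ => spectrum_nonneg_of_nonneg ((ContinuousLinearMap.nonneg_iff_isPositive A).mpr hApos) hμ
  -- injectivity of A and of A ^ 3
  have hAinj : ∀ x : H, A x = 0 → x = 0 := by
    intro x hx
    have h := hpos x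
    rw [hx] at h
    simp only [inner_zero_left, Complex.zero_re] at h
    have h2 : ‖x‖^2 = 0 := le_antisymm (by nlinarith) (sq_nonneg _)
    have h3 : ‖x‖ = 0 := by
      have := sq_eq_zero_iff.mp h2
      exact this
    exact norm_eq_zero.mp h3
  have hBinj : ∀ x : H, (A ^ 3) x = 0 → x = 0 := by
    intro x hx
    have h3 : A (A (A x)) = 0 := by
      have : (A ^ 3) x = A (A (A x)) := by
        simp [pow_succ, ContinuousLinearMap.mul_apply]
      rwa [this] at hx
    exact hAinj x (hAinj _ (hAinj _ h3))
  -- square integrability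
  have hsq : ∀ (f : ℝ → H), MemLp f 2 (volume.restrict (Ioi 0)) →
      Integrable (fun t => ‖f t‖^2) (volume.restrict (Ioi 0)) := by
    intro f hf
    have h := hf.integrable_norm_rpow (by norm_num) (by norm_num)
    have he : (fun t => ‖f t‖ ^ (2 : ℝ≥0∞).toReal) = (fun t => ‖f t‖^2) := by
      funext t
      rw [ENNReal.toReal_ofNat, show ((2:ℝ) = ((2:ℕ):ℝ)) by norm_num, Real.rpow_natCast]
    rwa [he] at h
  have hIB2 : Integrable (fun t => ‖(A ^ 3) (u t)‖^2) (volume.restrict (Ioi 0)) := by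
    refine (hsq u''' hu.sq3).congr ?_
    filter_upwards [heq] with t ht
    rw [ht]
  have hI3eqIB : ∫ t in Ioi (0:ℝ), ‖u''' t‖^2 = ∫ t in Ioi (0:ℝ), ‖(A ^ 3) (u t)‖^2 :=
    integral_congr_ae (by filter_upwards [heq] with t ht; rw [ht])
  -- boundary decay sequence
  have hgint : Integrable (fun t => ‖u t‖^2 + ‖u' t‖^2 + ‖u'' t‖^2) (volume.restrict (Ioi 0)) :=
    ((hsq u hu.sq0).add (hsq u' hu.sq1)).add (hsq u'' hu.sq2)
  obtain ⟨T, hTtop, hTnn, hTg0⟩ := aux_seq _ hgint (fun t => by positivity)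
  -- the interval integral identity along the sequence
  have hglobal : ∀ᵐ t ∂(volume : Measure ℝ), t ∈ Ioi (0:ℝ) → u''' t = (A ^ 3) (u t) :=
    (ae_restrict_iff' measurableSet_Ioi).mp heq
  have hid : ∀ n, ∫ t in (0:ℝ)..(T n), ‖(A ^ 3) (u t)‖^2
      = (⟪u'' (T n), (A ^ 3) (u (T n))⟫_ℂ).re
        - (1/2) * (⟪u' (T n), (A ^ 3) (u' (T n))⟫_ℂ).re
        + (1/2) * (⟪u' 0, (A ^ 3) (u' 0)⟫_ℂ).re := by
    intro n
    rw [← aux_identity hB hu h0 (hTnn n)]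
    apply intervalIntegral.integral_congr_ae
    filter_upwards [hglobal] with t h ht
    have ht' : t ∈ Ioi (0:ℝ) := by
      rcases Set.mem_uIoc.mp ht with h1 | h2
      · exact h1.1
      · exact absurd (lt_of_le_of_lt (hTnn n) h2.1) (not_lt.mpr h2.2)
    rw [h ht']
    exact (inner_self_eq_norm_sq (𝕜 := ℂ) _).symm
  -- limits
  have hlim1 : Filter.Tendsto (fun n => ∫ t in (0:ℝ)..(T n), ‖(A ^ 3) (u t)‖^2)
      Filter.atTop (nhds (∫ t in Ioi (0:ℝ), ‖(A ^ 3) (u t)‖^2)) :=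
    intervalIntegral_tendsto_integral_Ioi 0 hIB2 hTtop
  have hkey : Filter.Tendsto (fun n => (⟪u'' (T n), (A ^ 3) (u (T n))⟫_ℂ).re
      - (1/2) * (⟪u' (T n), (A ^ 3) (u' (T n))⟫_ℂ).re) Filter.atTop (nhds 0) := by
    apply squeeze_zero_norm (a := fun n => ‖(A ^ 3 : H →L[ℂ] H)‖ * (‖u (T n)‖^2 + ‖u' (T n)‖^2 + ‖u'' (T n)‖^2))
    · intro n
      have e1 : |(⟪u'' (T n), (A ^ 3) (u (T n))⟫_ℂ).re|
          ≤ ‖u'' (T n)‖ * (‖(A ^ 3 : H →L[ℂ] H)‖ * ‖u (T n)‖) := by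
        calc |(⟪u'' (T n), (A ^ 3) (u (T n))⟫_ℂ).re| ≤ ‖(⟪u'' (T n), (A ^ 3) (u (T n))⟫_ℂ)‖ := by
              exact Complex.abs_re_le_norm _
          _ ≤ ‖u'' (T n)‖ * ‖(A ^ 3) (u (T n))‖ := norm_inner_le_norm _ _
          _ ≤ ‖u'' (T n)‖ * (‖(A ^ 3 : H →L[ℂ] H)‖ * ‖u (T n)‖) :=
              mul_le_mul_of_nonneg_left ((A ^ 3).le_opNorm _) (norm_nonneg _)
      have e2 : |(⟪u' (T n), (A ^ 3) (u' (T n))⟫_ℂ).re|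
          ≤ ‖u' (T n)‖ * (‖(A ^ 3 : H →L[ℂ] H)‖ * ‖u' (T n)‖) := by
        calc |(⟪u' (T n), (A ^ 3) (u' (T n))⟫_ℂ).re| ≤ ‖(⟪u' (T n), (A ^ 3) (u' (T n))⟫_ℂ)‖ := by
              exact Complex.abs_re_le_norm _
          _ ≤ ‖u' (T n)‖ * ‖(A ^ 3) (u' (T n))‖ := norm_inner_le_norm _ _
          _ ≤ ‖u' (T n)‖ * (‖(A ^ 3 : H →L[ℂ] H)‖ * ‖u' (T n)‖) :=
              mul_le_mul_of_nonneg_left ((A ^ 3).le_opNorm _) (norm_nonneg _)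
      have hBn : (0:ℝ) ≤ ‖(A ^ 3 : H →L[ℂ] H)‖ := norm_nonneg _
      rw [Real.norm_eq_abs]
      calc |(⟪u'' (T n), (A ^ 3) (u (T n))⟫_ℂ).re
            - (1/2) * (⟪u' (T n), (A ^ 3) (u' (T n))⟫_ℂ).re|
          ≤ |(⟪u'' (T n), (A ^ 3) (u (T n))⟫_ℂ).re|
            + (1/2) * |(⟪u' (T n), (A ^ 3) (u' (T n))⟫_ℂ).re| := by
            have := abs_sub_abs_le_abs_sub (0:ℝ) (0:ℝ)
            rw [abs_sub_comm]
            calc |(1/2) * (⟪u' (T n), (A ^ 3) (u' (T n))⟫_ℂ).re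
                  - (⟪u'' (T n), (A ^ 3) (u (T n))⟫_ℂ).re|
                ≤ |(1/2) * (⟪u' (T n), (A ^ 3) (u' (T n))⟫_ℂ).re|
                  + |(⟪u'' (T n), (A ^ 3) (u (T n))⟫_ℂ).re| := abs_sub _ _
              _ = |(⟪u'' (T n), (A ^ 3) (u (T n))⟫_ℂ).re|
                  + (1/2) * |(⟪u' (T n), (A ^ 3) (u' (T n))⟫_ℂ).re| := by
                  rw [abs_mul]
                  rw [show |(1/2 : ℝ)| = 1/2 by norm_num]
                  ring
        _ ≤ ‖(A ^ 3 : H →L[ℂ] H)‖ * (‖u (T n)‖^2 + ‖u' (T n)‖^2 + ‖u'' (T n)‖^2) := by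
            nlinarith [sq_nonneg (‖u'' (T n)‖ - ‖u (T n)‖), sq_nonneg (‖u' (T n)‖),
              norm_nonneg (u (T n)), norm_nonneg (u' (T n)), norm_nonneg (u'' (T n))]
    · have := hTg0.const_mul ‖(A ^ 3 : H →L[ℂ] H)‖
      simpa using this
  have hlim2 : Filter.Tendsto (fun n => (⟪u'' (T n), (A ^ 3) (u (T n))⟫_ℂ).re
      - (1/2) * (⟪u' (T n), (A ^ 3) (u' (T n))⟫_ℂ).re
      + (1/2) * (⟪u' 0, (A ^ 3) (u' 0)⟫_ℂ).re) Filter.atTop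
      (nhds ((1/2) * (⟪u' 0, (A ^ 3) (u' 0)⟫_ℂ).re)) := by
    have := hkey.add_const ((1/2) * (⟪u' 0, (A ^ 3) (u' 0)⟫_ℂ).re)
    rwa [zero_add] at this
  have hS : ∫ t in Ioi (0:ℝ), ‖(A ^ 3) (u t)‖^2 = (1/2) * (⟪u' 0, (A ^ 3) (u' 0)⟫_ℂ).re := by
    refine tendsto_nhds_unique ?_ hlim2
    have hfe : (fun n => ∫ t in (0:ℝ)..(T n), ‖(A ^ 3) (u t)‖^2)
        = (fun n => (⟪u'' (T n), (A ^ 3) (u (T n))⟫_ℂ).re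
          - (1/2) * (⟪u' (T n), (A ^ 3) (u' (T n))⟫_ℂ).re
          + (1/2) * (⟪u' 0, (A ^ 3) (u' 0)⟫_ℂ).re) := funext hid
    rwa [hfe] at hlim1
  -- identify the boundary term with the Apow norm
  have hC0 : (⟪u' 0, (A ^ 3) (u' 0)⟫_ℂ).re = ‖Apow A (3/2) (u' 0)‖^2 := by
    rw [show (⟪u' 0, (A ^ 3) (u' 0)⟫_ℂ).re = (⟪(A ^ 3) (u' 0), u' 0⟫_ℂ).re
        from inner_re_symm (𝕜 := ℂ) _ _]
    exact (aux_apow_sq hA hspec (u' 0)).symm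
  -- compute the W-norm
  have hWsq : (∫ t in Ioi (0:ℝ), ‖u''' t‖^2) + ∫ t in Ioi (0:ℝ), ‖(A ^ 3) (u t)‖^2
      = ‖Apow A (3/2) (K u)‖^2 := by
    rw [hI3eqIB, hS, hC0, h1]
    ring
  have hW : Wnorm A u u''' = ‖Apow A (3/2) (K u)‖ := by
    rw [Wnorm, hWsq]
    exact Real.sqrt_sq (norm_nonneg _)
  -- the contraction argument
  have hbound := hK u u' u'' u''' hu
  rw [hW] at hbound
  have hCzero : ‖Apow A (3/2) (K u)‖ = 0 := by
    nlinarith [norm_nonneg (Apow A (3/2) (K u))]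
  -- conclude the integral vanishes
  have hIB0 : ∫ t in Ioi (0:ℝ), ‖(A ^ 3) (u t)‖^2 = 0 := by
    have h3nonneg : (0:ℝ) ≤ ∫ t in Ioi (0:ℝ), ‖u''' t‖^2 :=
      integral_nonneg (fun t => sq_nonneg _)
    have := hWsq
    rw [hCzero] at this
    rw [hI3eqIB] at h3nonneg
    have hBnonneg : (0:ℝ) ≤ ∫ t in Ioi (0:ℝ), ‖(A ^ 3) (u t)‖^2 :=
      integral_nonneg (fun t => sq_nonneg _)
    nlinarith
  have hae0 : (fun t => ‖(A ^ 3) (u t)‖^2) =ᵐ[volume.restrict (Ioi 0)] 0 :=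
    (integral_eq_zero_iff_of_nonneg (fun t => sq_nonneg _) hIB2).mp hIB0
  have huae : u =ᵐ[volume.restrict (Ioi 0)] (fun _ => 0) := by
    filter_upwards [hae0] with t ht
    have h1' : ‖(A ^ 3) (u t)‖^2 = 0 := ht
    have h2' : (A ^ 3) (u t) = 0 := by
      rw [← norm_eq_zero]
      exact sq_eq_zero_iff.mp h1'
    exact hBinj _ h2'
  have huae' : u =ᵐ[volume.restrict (Ici 0)] (fun _ => 0) := by
    rwa [Measure.restrict_congr_set (Ioi_ae_eq_Ici)] at huae
  have hfin : EqOn u (fun _ => 0) (Ici 0) := by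
    apply Measure.eqOn_of_ae_eq huae' hcu continuousOn_const
    rw [interior_Ici, closure_Ioi]
  intro t ht
  exact hfin ht
end

section
/- If u is admissible and u(0) = 0, then 2 Re ∫₀^∞ ⟨u'''(t), A³u(t)⟩ dt = ‖A^{3/2} u'(0)‖². -/
open MeasureTheory Set

section Helpers

variable {H : Type*} [NormedAddCommGroup H] [InnerProductSpace ℂ H] [CompleteSpace H]

local notation "⟪" x ", " y "⟫" => @inner ℂ _ _ x y

private lemma myKey (A : H →L[ℂ] H) (hA : IsSelfAdjoint A) (μ₀ : ℝ) (hμ₀ : 0 < μ₀)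
    (hpos : ∀ x : H, μ₀ * ‖x‖ ^ 2 ≤ (inner ℂ (A x) x : ℂ).re) (x : H) :
    (inner ℂ x ((A ^ 3) x) : ℂ).re = ‖Apow A (3 / 2) x‖ ^ 2 := by
  have hP : A.IsPositive := ⟨hA.isSymmetric, fun y => le_trans (by positivity) (hpos y)⟩
  have hn : (0 : H →L[ℂ] H) ≤ A := (ContinuousLinearMap.nonneg_iff_isPositive A).mpr hP
  have hspec : ∀ μ ∈ spectrum ℝ A, (0:ℝ) ≤ μ := fun μ h => spectrum_nonneg_of_nonneg hn h
  have hcont : ContinuousOn (fun μ : ℝ => μ ^ (3/2 : ℝ)) (spectrum ℝ A) := by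
    apply ContinuousOn.mono (s := Set.univ) _ (Set.subset_univ _)
    exact Continuous.continuousOn (continuous_iff_continuousAt.mpr fun μ =>
      Real.continuousAt_rpow_const μ _ (Or.inr (by norm_num)))
  have hBB : Apow A (3/2) * Apow A (3/2) = A ^ 3 := by
    rw [Apow, ← cfc_mul _ _ A hcont hcont]
    have heq : (spectrum ℝ A).EqOn (fun μ : ℝ => μ ^ (3/2:ℝ) * μ ^ (3/2:ℝ))
        (fun μ : ℝ => μ ^ (3:ℕ)) := by
      intro μ hμ
      have h0 : (0:ℝ) ≤ μ := hspec μ hμ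
      simp only
      rw [← Real.rpow_natCast μ 3, ← Real.rpow_add' h0 (by norm_num)]
      norm_num
    rw [cfc_congr heq, cfc_pow_id A 3]
  have hB : IsSelfAdjoint (Apow A (3/2)) := cfc_predicate _ A
  have h3 : (A ^ 3) x = Apow A (3/2) (Apow A (3/2) x) := by rw [← hBB]; rfl
  rw [h3]
  have h2 : (inner ℂ ((Apow A (3/2)) x) ((Apow A (3/2)) x) : ℂ)
      = inner ℂ x ((Apow A (3/2)) ((Apow A (3/2)) x)) := hB.isSymmetric x _
  rw [← h2, @inner_self_eq_norm_sq_to_K ℂ]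
  simp [← Complex.ofReal_pow]

private lemma myIntegrableInner {α : Type*} [MeasurableSpace α] {μ : Measure α} {f g : α → H}
    (hf : MemLp f 2 μ) (hg : MemLp g 2 μ) : Integrable (fun x => ⟪f x, g x⟫) μ := by
  have h := L2.integrable_inner (𝕜 := ℂ) (hf.toLp f) (hg.toLp g)
  refine h.congr ?_
  filter_upwards [hf.coeFn_toLp, hg.coeFn_toLp] with x h1 h2
  rw [h1, h2]

private lemma myIntegralRe {α : Type*} [MeasurableSpace α] {ν : Measure α} {f : α → ℂ}
    (hf : Integrable f ν) : (∫ x, f x ∂ν).re = ∫ x, (f x).re ∂ν := by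
  simpa using (integral_re hf).symm

private lemma myIntegrableRe {α : Type*} [MeasurableSpace α] {ν : Measure α} {f : α → ℂ}
    (hf : Integrable f ν) : Integrable (fun x => (f x).re) ν := by
  simpa using hf.re

private lemma myInnerIntegralLeft {α : Type*} [MeasurableSpace α] {μ : Measure α} {f : α → H}
    (hf : Integrable f μ) (c : H) : ∫ x, ⟪f x, c⟫ ∂μ = ⟪∫ x, f x ∂μ, c⟫ := by
  calc ∫ x, ⟪f x, c⟫ ∂μ = ∫ x, starRingEnd ℂ ⟪c, f x⟫ ∂μ :=
        integral_congr_ae (Filter.Eventually.of_forall fun x => (inner_conj_symm _ _).symm)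
    _ = starRingEnd ℂ (∫ x, ⟪c, f x⟫ ∂μ) := integral_conj
    _ = starRingEnd ℂ ⟪c, ∫ x, f x ∂μ⟫ := by rw [integral_inner hf]
    _ = _ := inner_conj_symm _ _

private lemma myLimitZero {g : ℝ → ℝ} (hg : IntegrableOn g (Ioi 0)) {L : ℝ}
    (hL : Filter.Tendsto g Filter.atTop (nhds L)) : L = 0 := by
  by_contra hne
  have hpos : 0 < |L| / 2 := by positivity
  have hev : ∀ᶠ t in Filter.atTop, dist (g t) L < |L| / 2 := Metric.tendsto_nhds.mp hL _ hpos
  obtain ⟨T₀, hT₀⟩ := Filter.eventually_atTop.mp hev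
  set T₁ := max T₀ 1 with hT₁
  have hsub : Ioi T₁ ⊆ Ioi (0:ℝ) := fun y hy =>
    lt_trans (lt_of_lt_of_le zero_lt_one (le_max_right T₀ 1)) hy
  have hg' : IntegrableOn g (Ioi T₁) := hg.mono_set hsub
  have hconst : Integrable (fun _ : ℝ => |L| / 2) (volume.restrict (Ioi T₁)) := by
    refine Integrable.mono' hg'.norm aestronglyMeasurable_const ?_
    rw [ae_restrict_iff' measurableSet_Ioi]
    refine Filter.Eventually.of_forall fun t ht => ?_
    have h1 := hT₀ t (le_trans (le_max_left _ _) (le_of_lt ht))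
    rw [Real.dist_eq] at h1
    have h2 : |L| - |g t| ≤ |g t - L| := by
      have := abs_sub_abs_le_abs_sub L (g t)
      rwa [abs_sub_comm] at this
    have h3 : |L| / 2 ≤ |g t| := by linarith
    calc ‖(|L| / 2)‖ = |L| / 2 := Real.norm_of_nonneg (by positivity)
      _ ≤ |g t| := h3
      _ = ‖g t‖ := (Real.norm_eq_abs _).symm
  rw [integrable_const_iff] at hconst
  rcases hconst with h | h
  · have : |L| = 0 := by linarith [abs_nonneg L]
    exact hne (abs_eq_zero.mp this)
  · have h := h.measure_univ_lt_top
    rw [Measure.restrict_apply_univ, Real.volume_Ioi] at h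
    exact absurd h (lt_irrefl _)

private lemma myParts (f v w w' : ℝ → H) (T : ℝ) (hT : 0 < T)
    (hfi : IntegrableOn f (Ioc 0 T))
    (hfund : ∀ t ∈ Icc (0:ℝ) T, v t = v 0 + ∫ s in Ioc (0:ℝ) t, f s)
    (hv : ContinuousOn v (Icc 0 T))
    (hw : ∀ t ∈ Icc (0:ℝ) T, HasDerivWithinAt w (w' t) (Icc 0 T) t)
    (hw' : ContinuousOn w' (Icc 0 T)) :
    ∫ t in Ioc (0:ℝ) T, ⟪f t, w t⟫
      = ⟪v T, w T⟫ - ⟪v 0, w 0⟫ - ∫ t in Ioc (0:ℝ) T, ⟪v t, w' t⟫ := by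
  set μT := volume.restrict (Ioc (0:ℝ) T) with hμT
  have hwc : ContinuousOn w (Icc 0 T) := fun t ht => (hw t ht).continuousWithinAt
  have hw'int : IntegrableOn w' (Icc 0 T) := hw'.integrableOn_compact isCompact_Icc
  have hIocsub : ∀ t : ℝ, 0 ≤ t → Ioc t T ⊆ Icc 0 T :=
    fun t h y hy => ⟨h.trans hy.1.le, hy.2⟩
  have hftc : ∀ t ∈ Icc (0:ℝ) T, (∫ r in Ioc t T, w' r) = w T - w t := by
    intro t ht
    have h1 : ∀ x ∈ Ioo t T, HasDerivWithinAt w (w' x) (Ioi x) x := by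
      intro x hx
      have hx' : x ∈ Icc (0:ℝ) T := ⟨le_trans ht.1 hx.1.le, hx.2.le⟩
      refine (hw x hx').mono_of_mem_nhdsWithin ?_
      refine mem_nhdsWithin.mpr ⟨Iio T, isOpen_Iio, hx.2, ?_⟩
      rintro y ⟨hy1, hy2⟩
      exact ⟨le_of_lt (lt_of_le_of_lt hx'.1 hy2), le_of_lt hy1⟩
    have h2 := intervalIntegral.integral_eq_sub_of_hasDeriv_right_of_le ht.2
      (hwc.mono (Icc_subset_Icc ht.1 le_rfl)) h1
      ((hw'.mono (Icc_subset_Icc ht.1 le_rfl)).intervalIntegrable_of_Icc ht.2)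
    rw [intervalIntegral.integral_of_le ht.2] at h2
    exact h2
  set k : ℝ → ℝ → ℂ := fun t r => if t < r then ⟪f t, w' r⟫ else 0 with hk_def
  have claim1 : ∀ t ∈ Ioc (0:ℝ) T, ∫ r, k t r ∂μT = ∫ r in Ioc t T, ⟪f t, w' r⟫ := by
    intro t ht
    have he : (fun r => k t r) = (Ioi t).indicator (fun r => ⟪f t, w' r⟫) := by
      funext r; simp [hk_def, Set.indicator_apply, mem_Ioi]
    rw [he, hμT, integral_indicator measurableSet_Ioi,
      Measure.restrict_restrict measurableSet_Ioi]
    congr 2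
    ext r
    simp only [mem_inter_iff, mem_Ioi, mem_Ioc]
    exact ⟨fun ⟨h1, _, h3⟩ => ⟨h1, h3⟩, fun ⟨h1, h2⟩ => ⟨h1, ht.1.trans h1, h2⟩⟩
  have claim2 : ∀ r ∈ Ioc (0:ℝ) T, ∫ t, k t r ∂μT = ⟪v r, w' r⟫ - ⟪v 0, w' r⟫ := by
    intro r hr
    have he : (fun t => k t r) = (Iio r).indicator (fun t => ⟪f t, w' r⟫) := by
      funext t; simp [hk_def, Set.indicator_apply, mem_Iio]
    rw [he, hμT, integral_indicator measurableSet_Iio,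
      Measure.restrict_restrict measurableSet_Iio]
    have hset : Iio r ∩ Ioc 0 T = Ioo 0 r := by
      ext t
      simp only [mem_inter_iff, mem_Iio, mem_Ioc, mem_Ioo]
      exact ⟨fun ⟨h1, h2, _⟩ => ⟨h2, h1⟩, fun ⟨h1, h2⟩ => ⟨h2, h1, h2.le.trans hr.2⟩⟩
    rw [hset, ← integral_Ioc_eq_integral_Ioo,
      myInnerIntegralLeft (hfi.mono_set (fun y hy => ⟨hy.1, hy.2.trans hr.2⟩)) (w' r)]
    have hfr := hfund r ⟨hr.1.le, hr.2⟩
    have heq : (∫ t in Ioc (0:ℝ) r, f t) = v r - v 0 := by rw [hfr]; abel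
    rw [heq, inner_sub_left]
  have hmeas : AEStronglyMeasurable (Function.uncurry k) (μT.prod μT) := by
    have h1 : AEStronglyMeasurable (fun p : ℝ × ℝ => ⟪f p.1, w' p.2⟫) (μT.prod μT) :=
      AEStronglyMeasurable.inner (𝕜 := ℂ) (hfi.aestronglyMeasurable.comp_fst)
        (((hw'.mono Ioc_subset_Icc_self).aestronglyMeasurable measurableSet_Ioc).comp_snd)
    have he : Function.uncurry k
        = Set.indicator {p : ℝ × ℝ | p.1 < p.2} (fun p => ⟪f p.1, w' p.2⟫) := by
      funext p
      simp only [Function.uncurry, hk_def, Set.indicator_apply, Set.mem_setOf_eq]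
    rw [he]
    exact h1.indicator (measurableSet_lt measurable_fst measurable_snd)
  have hdom : Integrable (fun p : ℝ × ℝ => ‖f p.1‖ * ‖w' p.2‖) (μT.prod μT) :=
    Integrable.mul_prod (L := ℝ) hfi.norm (hw'int.mono_set Ioc_subset_Icc_self).norm
  have hkint : Integrable (Function.uncurry k) (μT.prod μT) := by
    refine hdom.mono' hmeas (Filter.Eventually.of_forall ?_)
    rintro ⟨t, r⟩
    simp only [Function.uncurry]
    by_cases h : t < r
    · simp only [hk_def, if_pos h]; exact norm_inner_le_norm _ _
    · simp only [hk_def, if_neg h, norm_zero]; positivity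
  have hdecomp : ∀ t ∈ Ioc (0:ℝ) T, ⟪f t, w t⟫ = ⟪f t, w T⟫ - ∫ r, k t r ∂μT := by
    intro t ht
    have htI : t ∈ Icc (0:ℝ) T := ⟨ht.1.le, ht.2⟩
    rw [claim1 t ht, integral_inner (hw'int.mono_set (hIocsub t ht.1.le)) (f t),
      ← inner_sub_right, hftc t htI]
    congr 1
    abel
  have hint1 : Integrable (fun t => ⟪f t, w T⟫) μT := hfi.inner_const _
  have hint2 : Integrable (fun t => ∫ r, k t r ∂μT) μT := hkint.integral_prod_left
  have hint3 : Integrable (fun r => ⟪v r, w' r⟫) μT :=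
    ((hv.inner hw').integrableOn_compact isCompact_Icc).mono_set Ioc_subset_Icc_self
  have hint4 : Integrable (fun r => ⟪v 0, w' r⟫) μT :=
    (hw'int.mono_set Ioc_subset_Icc_self).const_inner _
  have lhs1 : ∫ t, ⟪f t, w t⟫ ∂μT = ∫ t, (⟪f t, w T⟫ - ∫ r, k t r ∂μT) ∂μT := by
    apply integral_congr_ae
    filter_upwards [ae_restrict_mem measurableSet_Ioc] with t ht
    exact hdecomp t ht
  have hswap : ∫ t, ∫ r, k t r ∂μT ∂μT = ∫ r, ∫ t, k t r ∂μT ∂μT :=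
    integral_integral_swap hkint
  have inner1 : ∫ r, ∫ t, k t r ∂μT ∂μT
      = (∫ r, ⟪v r, w' r⟫ ∂μT) - ∫ r, ⟪v 0, w' r⟫ ∂μT := by
    rw [← integral_sub hint3 hint4]
    apply integral_congr_ae
    filter_upwards [ae_restrict_mem measurableSet_Ioc] with r hr
    exact claim2 r hr
  have inner2 : ∫ r, ⟪v 0, w' r⟫ ∂μT = ⟪v 0, w T - w 0⟫ := by
    rw [integral_inner (hw'int.mono_set Ioc_subset_Icc_self) (v 0)]
    congr 1
    exact hftc 0 (left_mem_Icc.mpr hT.le)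
  have hfT : (∫ t in Ioc (0:ℝ) T, f t) = v T - v 0 := by
    rw [hfund T (right_mem_Icc.mpr hT.le)]; abel
  calc ∫ t, ⟪f t, w t⟫ ∂μT
      = (∫ t, ⟪f t, w T⟫ ∂μT) - ∫ t, ∫ r, k t r ∂μT ∂μT := by
        rw [lhs1, integral_sub hint1 hint2]
    _ = ⟪v T - v 0, w T⟫ - ((∫ r, ⟪v r, w' r⟫ ∂μT) - ⟪v 0, w T - w 0⟫) := by
        rw [hswap, inner1, inner2, myInnerIntegralLeft hfi (w T), hfT]
    _ = ⟪v T, w T⟫ - ⟪v 0, w 0⟫ - ∫ t, ⟪v t, w' t⟫ ∂μT := by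
        rw [inner_sub_left, inner_sub_right]
        ring

private lemma myFTC2 (K : H →L[ℂ] H) (hK : IsSelfAdjoint K) (u' u'' : ℝ → H)
    (h2 : ∀ t ∈ Ici (0:ℝ), HasDerivWithinAt u' (u'' t) (Ici 0) t)
    (hc2 : ContinuousOn u'' (Ici 0))
    (T : ℝ) (hT : 0 < T) :
    ∫ t in Ioc (0:ℝ) T, 2 * (⟪u'' t, K (u' t)⟫).re
      = (⟪u' T, K (u' T)⟫).re - (⟪u' 0, K (u' 0)⟫).re := by
  have hc1 : ContinuousOn u' (Ici 0) := fun t ht => (h2 t ht).continuousWithinAt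
  have hderiv : ∀ t ∈ Ici (0:ℝ),
      HasDerivWithinAt (fun t => (⟪u' t, K (u' t)⟫).re)
        (2 * (⟪u'' t, K (u' t)⟫).re) (Ici 0) t := by
    intro t ht
    have hKd : HasDerivWithinAt (fun t => K (u' t)) (K (u'' t)) (Ici 0) t :=
      ((K.restrictScalars ℝ).hasFDerivAt (x := u' t)).comp_hasDerivWithinAt t (h2 t ht)
    have hC : HasDerivWithinAt (fun t => ⟪u' t, K (u' t)⟫)
        (⟪u' t, K (u'' t)⟫ + ⟪u'' t, K (u' t)⟫) (Ici 0) t :=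
      (h2 t ht).inner ℂ hKd
    have hR := (Complex.reCLM.hasFDerivAt
      (x := ⟪u' t, K (u' t)⟫)).comp_hasDerivWithinAt t hC
    refine hR.congr_deriv ?_
    have hsym : ⟪K (u'' t), u' t⟫ = ⟪u'' t, K (u' t)⟫ := hK.isSymmetric _ _
    have hcj : ⟪u' t, K (u'' t)⟫ = starRingEnd ℂ ⟪u'' t, K (u' t)⟫ := by
      rw [← hsym, inner_conj_symm]
    rw [map_add, hcj]
    simp only [Complex.reCLM_apply, Complex.conj_re]
    ring
  have key := intervalIntegral.integral_eq_sub_of_hasDeriv_right_of_le hT.le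
    (f := fun t => (⟪u' t, K (u' t)⟫).re)
    (f' := fun t => 2 * (⟪u'' t, K (u' t)⟫).re)
    (by
      have : ContinuousOn (fun t => ⟪u' t, K (u' t)⟫) (Icc 0 T) :=
        (hc1.mono Icc_subset_Ici_self).inner
          ((K.continuous.comp_continuousOn hc1).mono Icc_subset_Ici_self)
      exact (Complex.continuous_re.comp_continuousOn this))
    (fun x hx => (hderiv x (le_of_lt hx.1)).mono
      (fun y hy => le_trans (le_of_lt hx.1) (le_of_lt hy)))
    (by
      apply ContinuousOn.intervalIntegrable_of_Icc hT.le
      have : ContinuousOn (fun t => ⟪u'' t, K (u' t)⟫) (Icc 0 T) :=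
        (hc2.mono Icc_subset_Ici_self).inner
          ((K.continuous.comp_continuousOn hc1).mono Icc_subset_Ici_self)
      exact continuousOn_const.mul (Complex.continuous_re.comp_continuousOn this))
  rw [intervalIntegral.integral_of_le hT.le] at key
  exact key

end Helpers

/-- If `u` is admissible and `u(0) = 0`, then
`2 Re ∫₀^∞ ⟨u'''(t), A³u(t)⟩ dt = ‖A^{3/2} u'(0)‖²`. -/
theorem stmt_6 {H : Type*} [NormedAddCommGroup H] [InnerProductSpace ℂ H] [CompleteSpace H]
    (A : H →L[ℂ] H) (hA : IsSelfAdjoint A) (μ₀ : ℝ) (hμ₀ : 0 < μ₀)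
    (hpos : ∀ x : H, μ₀ * ‖x‖ ^ 2 ≤ (inner ℂ (A x) x : ℂ).re)
    (u u' u'' u''' : ℝ → H) (hu : Admissible u u' u'' u''')
    (h0 : u 0 = 0) :
    2 * (∫ t in Ioi (0 : ℝ), (inner ℂ (u''' t) ((A ^ 3) (u t)) : ℂ)).re
      = ‖Apow A (3 / 2) (u' 0)‖ ^ 2 := by
  set K : H →L[ℂ] H := A ^ 3 with hKdef
  have hK : IsSelfAdjoint K := hA.pow 3
  have h1c : ContinuousOn u (Ici 0) := fun t ht => (hu.hasDeriv1 t ht).continuousWithinAt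
  have h2c : ContinuousOn u' (Ici 0) := fun t ht => (hu.hasDeriv2 t ht).continuousWithinAt
  have hKu : MemLp (fun t => K (u t)) 2 (volume.restrict (Ioi 0)) := K.comp_memLp' hu.sq0
  have hKu' : MemLp (fun t => K (u' t)) 2 (volume.restrict (Ioi 0)) := K.comp_memLp' hu.sq1
  have hφC : Integrable (fun t => (inner ℂ (u''' t) (K (u t)) : ℂ)) (volume.restrict (Ioi 0)) :=
    myIntegrableInner hu.sq3 hKu
  have ha1 : Integrable (fun t => (inner ℂ (u'' t) (K (u t)) : ℂ)) (volume.restrict (Ioi 0)) :=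
    myIntegrableInner hu.sq2 hKu
  have ha2 : Integrable (fun t => (inner ℂ (u' t) (K (u' t)) : ℂ)) (volume.restrict (Ioi 0)) :=
    myIntegrableInner hu.sq1 hKu'
  set G : ℝ → ℝ := fun t =>
    2 * (inner ℂ (u'' t) (K (u t)) : ℂ).re - (inner ℂ (u' t) (K (u' t)) : ℂ).re with hGdef
  have hGint : Integrable G (volume.restrict (Ioi 0)) :=
    ((myIntegrableRe ha1).const_mul 2).sub (myIntegrableRe ha2)
  have hφint : Integrable (fun t => 2 * (inner ℂ (u''' t) (K (u t)) : ℂ).re)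
      (volume.restrict (Ioi 0)) := (myIntegrableRe hφC).const_mul 2
  -- per-T identity
  have hE : ∀ T : ℝ, 0 < T →
      (∫ t in Ioc (0:ℝ) T, 2 * (inner ℂ (u''' t) (K (u t)) : ℂ).re) = G T - G 0 := by
    intro T hT
    have hIocIoi : Ioc (0:ℝ) T ⊆ Ioi 0 := fun y hy => hy.1
    have hparts := myParts u''' u'' (fun t => K (u t)) (fun t => K (u' t)) T hT
      ((hu.locInt3.integrableOn_compact_subset Icc_subset_Ici_self
        isCompact_Icc).mono_set Ioc_subset_Icc_self)
      (fun t ht => hu.fund t ht.1)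
      (hu.cont2.mono Icc_subset_Ici_self)
      (fun t ht => ((K.restrictScalars ℝ).hasFDerivAt (x := u t)).comp_hasDerivWithinAt t
        ((hu.hasDeriv1 t ht.1).mono Icc_subset_Ici_self))
      ((K.continuous.comp_continuousOn h2c).mono Icc_subset_Ici_self)
    have hbint : Integrable (fun t => (inner ℂ (u'' t) (K (u' t)) : ℂ))
        (volume.restrict (Ioc (0:ℝ) T)) :=
      (((hu.cont2.mono Icc_subset_Ici_self).inner
        ((K.continuous.comp_continuousOn h2c).mono
          Icc_subset_Ici_self)).integrableOn_compact isCompact_Icc).mono_set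
        Ioc_subset_Icc_self
    have e0 : (∫ t in Ioc (0:ℝ) T, (inner ℂ (u''' t) (K (u t)) : ℂ)).re
        = (inner ℂ (u'' T) (K (u T)) : ℂ).re - (inner ℂ (u'' 0) (K (u 0)) : ℂ).re
          - (∫ t in Ioc (0:ℝ) T, (inner ℂ (u'' t) (K (u' t)) : ℂ)).re := by
      rw [hparts]; simp [Complex.sub_re]
    have e1 : (∫ t in Ioc (0:ℝ) T, 2 * (inner ℂ (u''' t) (K (u t)) : ℂ).re)
        = 2 * (∫ t in Ioc (0:ℝ) T, (inner ℂ (u''' t) (K (u t)) : ℂ)).re := by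
      rw [integral_const_mul 2 _, myIntegralRe (IntegrableOn.mono_set hφC hIocIoi)]
    have e2 : (∫ t in Ioc (0:ℝ) T, 2 * (inner ℂ (u'' t) (K (u' t)) : ℂ).re)
        = 2 * (∫ t in Ioc (0:ℝ) T, (inner ℂ (u'' t) (K (u' t)) : ℂ)).re := by
      rw [integral_const_mul 2 _, myIntegralRe hbint]
    have e3 := myFTC2 K hK u' u'' hu.hasDeriv2 hu.cont2 T hT
    rw [e2] at e3
    rw [e1, e0, hGdef]
    simp only
    linarith
  have htend0 := intervalIntegral_tendsto_integral_Ioi 0 hφint Filter.tendsto_id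
  have htendG : Filter.Tendsto G Filter.atTop
      (nhds ((∫ t in Ioi (0:ℝ), 2 * (inner ℂ (u''' t) (K (u t)) : ℂ).re) + G 0)) := by
    refine Filter.Tendsto.congr' ?_ (htend0.add tendsto_const_nhds)
    filter_upwards [Filter.eventually_gt_atTop (0:ℝ)] with T hT
    simp only [id_eq]
    rw [intervalIntegral.integral_of_le hT.le, hE T hT]
    ring
  have hL0 : (∫ t in Ioi (0:ℝ), 2 * (inner ℂ (u''' t) (K (u t)) : ℂ).re) + G 0 = 0 :=
    myLimitZero hGint htendG
  have hG0 : G 0 = -(inner ℂ (u' 0) (K (u' 0)) : ℂ).re := by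
    simp [hGdef, h0, map_zero, inner_zero_right]
  have hmain : (∫ t in Ioi (0:ℝ), 2 * (inner ℂ (u''' t) (K (u t)) : ℂ).re)
      = (inner ℂ (u' 0) (K (u' 0)) : ℂ).re := by
    rw [hG0] at hL0; linarith
  calc 2 * (∫ t in Ioi (0 : ℝ), (inner ℂ (u''' t) (K (u t)) : ℂ)).re
      = ∫ t in Ioi (0:ℝ), 2 * (inner ℂ (u''' t) (K (u t)) : ℂ).re := by
        rw [integral_const_mul 2 _, myIntegralRe hφC]
    _ = (inner ℂ (u' 0) (K (u' 0)) : ℂ).re := hmain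
    _ = ‖Apow A (3 / 2) (u' 0)‖ ^ 2 := myKey A hA μ₀ hμ₀ hpos (u' 0)
end

section
/- If u is admissible and u(0) = 0, then ‖A²u'‖²_{L²} ≤ ‖A³u‖_{L²} · ‖Au''‖_{L²}. -/
open MeasureTheory Set

section AuxLemmas

lemma aux_mul_norm_integrable {α : Type*} [MeasurableSpace α] {μ : Measure α}
    {E F : Type*} [NormedAddCommGroup E] [NormedAddCommGroup F]
    {v : α → E} {w : α → F} (hv : MemLp v 2 μ) (hw : MemLp w 2 μ) :
    Integrable (fun t => ‖v t‖ * ‖w t‖) μ := by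
  have hv2 : Integrable (fun t => ‖v t‖ ^ (2:ℝ)) μ := by
    simpa using hv.integrable_norm_rpow two_ne_zero ENNReal.ofNat_ne_top
  have hw2 : Integrable (fun t => ‖w t‖ ^ (2:ℝ)) μ := by
    simpa using hw.integrable_norm_rpow two_ne_zero ENNReal.ofNat_ne_top
  refine ((hv2.add hw2).div_const 2).mono' (hv.1.norm.mul hw.1.norm) ?_
  filter_upwards with t
  have h1 : ‖v t‖ ^ (2:ℝ) = ‖v t‖ ^ (2:ℕ) := by
    rw [← Real.rpow_natCast]; norm_num
  have h2 : ‖w t‖ ^ (2:ℝ) = ‖w t‖ ^ (2:ℕ) := by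
    rw [← Real.rpow_natCast]; norm_num
  rw [Real.norm_of_nonneg (mul_nonneg (norm_nonneg _) (norm_nonneg _))]
  simp only [Pi.add_apply]
  rw [h1, h2]
  nlinarith [sq_nonneg (‖v t‖ - ‖w t‖)]

lemma aux_exists_small {h : ℝ → ℝ} (hint : IntegrableOn h (Ioi (0:ℝ)) volume)
    {δ : ℝ} (hδ : 0 < δ) (M : ℝ) :
    ∃ T, M ≤ T ∧ 0 ≤ T ∧ h T ≤ δ := by
  by_contra hc
  push_neg at hc
  set M₀ := max M 0 with hM₀
  have hsub : Ioi M₀ ⊆ Ioi 0 := fun t ht => lt_of_le_of_lt (le_max_right M 0) ht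
  have hint' : IntegrableOn h (Ioi M₀) volume := hint.mono_set hsub
  have hconst : Integrable (fun _ : ℝ => δ) (volume.restrict (Ioi M₀)) := by
    refine hint'.mono' aestronglyMeasurable_const ?_
    rw [ae_restrict_iff' measurableSet_Ioi]
    filter_upwards with t ht
    have := hc t ((le_max_left M 0).trans ht.le) ((le_max_right M 0).trans ht.le)
    rw [Real.norm_of_nonneg hδ.le]
    exact this.le
  rcases (integrable_const_iff).mp hconst with h0 | hfin
  · exact hδ.ne' h0
  · have hfin := hfin.measure_univ_lt_top
    rw [Measure.restrict_apply_univ, Real.volume_Ioi] at hfin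
    exact (lt_irrefl _ hfin).elim

lemma aux_holder {H : Type*} [NormedAddCommGroup H]
    {F G : ℝ → H} (hF : MemLp F 2 (volume.restrict (Ioi 0)))
    (hG : MemLp G 2 (volume.restrict (Ioi 0))) :
    ∫ t in Ioi (0:ℝ), ‖F t‖ * ‖G t‖
      ≤ Real.sqrt (∫ t in Ioi (0:ℝ), ‖F t‖ ^ 2) * Real.sqrt (∫ t in Ioi (0:ℝ), ‖G t‖ ^ 2) := by
  have h2 : ENNReal.ofReal (2:ℝ) = 2 := by
    rw [ENNReal.ofReal_ofNat]
  have hpq : (2:ℝ).HolderConjugate 2 := Real.HolderConjugate.two_two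
  have key := integral_mul_norm_le_Lp_mul_Lq (μ := volume.restrict (Ioi 0)) hpq
    (h2 ▸ hF) (h2 ▸ hG)
  have hrw : ∀ v : ℝ → H, (∫ t in Ioi (0:ℝ), ‖v t‖ ^ (2:ℝ)) = ∫ t in Ioi (0:ℝ), ‖v t‖ ^ (2:ℕ) := by
    intro v
    refine integral_congr_ae (Filter.Eventually.of_forall fun t => ?_)
    show ‖v t‖ ^ (2:ℝ) = ‖v t‖ ^ (2:ℕ)
    rw [← Real.rpow_natCast]; norm_num
  rw [hrw F, hrw G] at key
  calc ∫ t in Ioi (0:ℝ), ‖F t‖ * ‖G t‖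
      ≤ (∫ t in Ioi (0:ℝ), ‖F t‖ ^ (2:ℕ)) ^ (1/2:ℝ) * (∫ t in Ioi (0:ℝ), ‖G t‖ ^ (2:ℕ)) ^ (1/2:ℝ) := key
    _ = _ := by rw [← Real.sqrt_eq_rpow, ← Real.sqrt_eq_rpow]

variable {H : Type*} [NormedAddCommGroup H] [InnerProductSpace ℂ H] [CompleteSpace H]

lemma aux_key (A : H →L[ℂ] H) (hA : IsSelfAdjoint A) (y : H) :
    (inner ℂ ((A^3) y) (A y) : ℂ).re = ‖(A^2) y‖^2 := by
  have hS := ContinuousLinearMap.isSelfAdjoint_iff_isSymmetric.mp hA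
  have h3 : (A^3) y = A ((A^2) y) := by
    rw [pow_succ', ContinuousLinearMap.mul_apply]
  have h2 : A (A y) = (A^2) y := by
    rw [pow_two, ContinuousLinearMap.mul_apply]
  have hs := hS ((A^2) y) (A y)
  simp only [ContinuousLinearMap.coe_coe] at hs
  rw [h3, hs, h2]
  rw [inner_self_eq_norm_sq_to_K]; norm_cast

lemma aux_deriv_s11 (A : H →L[ℂ] H) (hA : IsSelfAdjoint A) (u u' u'' : ℝ → H)
    (hd1 : ∀ t ∈ Ici (0 : ℝ), HasDerivWithinAt u (u' t) (Ici 0) t)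
    (hd2 : ∀ t ∈ Ici (0 : ℝ), HasDerivWithinAt u' (u'' t) (Ici 0) t)
    (t : ℝ) (ht : t ∈ Ici (0:ℝ)) :
    HasDerivWithinAt (fun s => (inner ℂ ((A^3) (u s)) (A (u' s)) : ℂ).re)
      (‖(A^2) (u' t)‖^2 + (inner ℂ ((A^3) (u t)) (A (u'' t)) : ℂ).re) (Ici 0) t := by
  have hFd : HasDerivWithinAt (fun s => (A^3) (u s)) ((A^3) (u' t)) (Ici 0) t := by
    exact (((A^3).restrictScalars ℝ).hasFDerivAt (x := u t)).comp_hasDerivWithinAt t (hd1 t ht)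
  have hGd : HasDerivWithinAt (fun s => A (u' s)) (A (u'' t)) (Ici 0) t := by
    exact ((A.restrictScalars ℝ).hasFDerivAt (x := u' t)).comp_hasDerivWithinAt t (hd2 t ht)
  have hinner := hFd.inner ℂ hGd
  have hre := (Complex.reCLM.hasFDerivAt).comp_hasDerivWithinAt t hinner
  have heq : Complex.reCLM ((inner ℂ ((A^3) (u t)) (A (u'' t)) : ℂ)
      + (inner ℂ ((A^3) (u' t)) (A (u' t)) : ℂ))
      = ‖(A^2) (u' t)‖^2 + (inner ℂ ((A^3) (u t)) (A (u'' t)) : ℂ).re := by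
    simp only [map_add, Complex.reCLM_apply, Complex.add_re]
    rw [aux_key A hA (u' t)]
    ring
  rw [heq] at hre
  exact hre

end AuxLemmas

/-- If `u` is admissible and `u(0) = 0`, then `‖A²u'‖²_{L²} ≤ ‖A³u‖_{L²} ‖Au''‖_{L²}`. -/
theorem stmt_11 {H : Type*} [NormedAddCommGroup H] [InnerProductSpace ℂ H] [CompleteSpace H]
    (A : H →L[ℂ] H) (hA : IsSelfAdjoint A) (μ₀ : ℝ) (hμ₀ : 0 < μ₀)
    (hpos : ∀ x : H, μ₀ * ‖x‖ ^ 2 ≤ (inner ℂ (A x) x : ℂ).re)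
    (u u' u'' u''' : ℝ → H) (hu : Admissible u u' u'' u''')
    (h0 : u 0 = 0) :
    L2norm (fun t => (A ^ 2) (u' t)) ^ 2
      ≤ L2norm (fun t => (A ^ 3) (u t)) * L2norm (fun t => A (u'' t)) := by
  set q : ℝ → ℝ := fun t => ‖(A^2) (u' t)‖^2 with hq
  set r : ℝ → ℝ := fun t => (inner ℂ ((A^3) (u t)) (A (u'' t)) : ℂ).re with hr
  set f : ℝ → ℝ := fun t => (inner ℂ ((A^3) (u t)) (A (u' t)) : ℂ).re with hf
  set Cst := L2norm (fun t => (A^3) (u t)) * L2norm (fun t => A (u'' t)) with hCst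
  -- continuity facts
  have hcu : ContinuousOn u (Ici 0) := fun t ht => (hu.hasDeriv1 t ht).continuousWithinAt
  have hcu' : ContinuousOn u' (Ici 0) := fun t ht => (hu.hasDeriv2 t ht).continuousWithinAt
  have hcq : ContinuousOn q (Ici 0) := (((A^2).continuous.comp_continuousOn hcu').norm).pow 2
  have hcr : ContinuousOn r (Ici 0) :=
    Complex.continuous_re.comp_continuousOn
      (ContinuousOn.inner ((A^3).continuous.comp_continuousOn hcu)
        (A.continuous.comp_continuousOn hu.cont2))
  have hcf : ContinuousOn f (Ici 0) :=
    Complex.continuous_re.comp_continuousOn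
      (ContinuousOn.inner ((A^3).continuous.comp_continuousOn hcu)
        (A.continuous.comp_continuousOn hcu'))
  have hderiv : ∀ t ∈ Ici (0:ℝ), HasDerivWithinAt f (q t + r t) (Ici 0) t :=
    fun t ht => aux_deriv_s11 A hA u u' u'' hu.hasDeriv1 hu.hasDeriv2 t ht
  have hf0 : f 0 = 0 := by simp [hf, h0]
  -- fundamental theorem of calculus on [0, T]
  have hsplit : ∀ T, 0 ≤ T → (∫ t in Ioc (0:ℝ) T, q t) = f T - ∫ t in Ioc (0:ℝ) T, r t := by
    intro T hT
    have hIcc : Icc (0:ℝ) T ⊆ Ici 0 := Icc_subset_Ici_self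
    have hqr_cont : ContinuousOn (fun t => q t + r t) (Icc 0 T) :=
      (hcq.mono hIcc).add (hcr.mono hIcc)
    have hint : IntervalIntegrable (fun t => q t + r t) volume 0 T :=
      hqr_cont.intervalIntegrable_of_Icc hT
    have hFTC := intervalIntegral.integral_eq_sub_of_hasDeriv_right_of_le hT (hcf.mono hIcc)
      (fun x hx => (hderiv x (le_of_lt hx.1)).mono
        (fun y hy => le_trans (le_of_lt hx.1) (le_of_lt hy)))
      hint
    rw [intervalIntegral.integral_of_le hT, hf0, sub_zero] at hFTC
    have hqI : IntegrableOn q (Ioc 0 T) volume :=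
      ((hcq.mono hIcc).integrableOn_Icc).mono_set Ioc_subset_Icc_self
    have hrI : IntegrableOn r (Ioc 0 T) volume :=
      ((hcr.mono hIcc).integrableOn_Icc).mono_set Ioc_subset_Icc_self
    rw [integral_add hqI hrI] at hFTC
    linarith
  -- Cauchy–Schwarz bound for the r-integral
  have hmemF : MemLp (fun t => (A^3) (u t)) 2 (volume.restrict (Ioi 0)) :=
    (A^3).comp_memLp' hu.sq0
  have hmemG : MemLp (fun t => A (u'' t)) 2 (volume.restrict (Ioi 0)) :=
    A.comp_memLp' hu.sq2
  have hFGint : Integrable (fun t => ‖(A^3) (u t)‖ * ‖A (u'' t)‖) (volume.restrict (Ioi 0)) :=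
    aux_mul_norm_integrable hmemF hmemG
  have hholder : (∫ t in Ioi (0:ℝ), ‖(A^3) (u t)‖ * ‖A (u'' t)‖) ≤ Cst := by
    rw [hCst]
    simpa [L2norm] using aux_holder hmemF hmemG
  have hrIoc : ∀ T, 0 ≤ T → |∫ t in Ioc (0:ℝ) T, r t| ≤ Cst := by
    intro T hT
    have hIcc : Icc (0:ℝ) T ⊆ Ici 0 := Icc_subset_Ici_self
    have hrI : IntegrableOn r (Ioc 0 T) volume :=
      ((hcr.mono hIcc).integrableOn_Icc).mono_set Ioc_subset_Icc_self
    have habs : |∫ t in Ioc (0:ℝ) T, r t| ≤ ∫ t in Ioc (0:ℝ) T, |r t| := by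
      simpa [Real.norm_eq_abs] using
        norm_integral_le_integral_norm (μ := volume.restrict (Ioc (0:ℝ) T)) r
    have h1 : (∫ t in Ioc (0:ℝ) T, |r t|)
        ≤ ∫ t in Ioc (0:ℝ) T, ‖(A^3) (u t)‖ * ‖A (u'' t)‖ := by
      refine integral_mono hrI.abs (IntegrableOn.mono_set hFGint Ioc_subset_Ioi_self) fun t => ?_
      calc |r t| ≤ ‖(inner ℂ ((A^3) (u t)) (A (u'' t)) : ℂ)‖ := by
            rw [hr]; exact (Complex.abs_re_le_norm _)
        _ ≤ ‖(A^3) (u t)‖ * ‖A (u'' t)‖ := norm_inner_le_norm _ _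
    have h2 : (∫ t in Ioc (0:ℝ) T, ‖(A^3) (u t)‖ * ‖A (u'' t)‖)
        ≤ ∫ t in Ioi (0:ℝ), ‖(A^3) (u t)‖ * ‖A (u'' t)‖ :=
      setIntegral_mono_set hFGint
        (Filter.Eventually.of_forall fun t => mul_nonneg (norm_nonneg _) (norm_nonneg _))
        (HasSubset.Subset.eventuallyLE Ioc_subset_Ioi_self)
    linarith
  -- boundary term bound
  have hprod_int : IntegrableOn (fun t => ‖u t‖ * ‖u' t‖) (Ioi 0) volume :=
    aux_mul_norm_integrable hu.sq0 hu.sq1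
  set K := ‖A^3‖ * ‖A‖ with hK
  have hK0 : 0 ≤ K := mul_nonneg (norm_nonneg _) (norm_nonneg _)
  have hfT : ∀ T, f T ≤ K * (‖u T‖ * ‖u' T‖) := by
    intro T
    have h1 : f T ≤ ‖(inner ℂ ((A^3) (u T)) (A (u' T)) : ℂ)‖ := by
      rw [hf]
      exact le_trans (le_abs_self _)
        ((Complex.abs_re_le_norm _))
    have h2 := norm_inner_le_norm (𝕜 := ℂ) ((A^3) (u T)) (A (u' T))
    have h3 := (A^3).le_opNorm (u T)
    have h4 := A.le_opNorm (u' T)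
    calc f T ≤ ‖(A^3) (u T)‖ * ‖A (u' T)‖ := h1.trans h2
      _ ≤ (‖A^3‖ * ‖u T‖) * (‖A‖ * ‖u' T‖) :=
          mul_le_mul h3 h4 (norm_nonneg _) (mul_nonneg (norm_nonneg _) (norm_nonneg _))
      _ = K * (‖u T‖ * ‖u' T‖) := by rw [hK]; ring
  -- reduce the goal
  have hq_nonneg : ∀ t, 0 ≤ q t := fun t => by rw [hq]; positivity
  have hL2 : L2norm (fun t => (A^2) (u' t)) ^ 2 = ∫ t in Ioi (0:ℝ), q t := by
    rw [L2norm, Real.sq_sqrt (integral_nonneg hq_nonneg)]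
  rw [hL2]
  by_cases hqint : IntegrableOn q (Ioi 0) volume
  · refine le_of_forall_pos_le_add fun ε hε => ?_
    have hδ : 0 < ε / (K+1) := div_pos hε (by linarith)
    have hchoice : ∀ n : ℕ, ∃ T, (n:ℝ) ≤ T ∧ 0 ≤ T ∧ ‖u T‖ * ‖u' T‖ ≤ ε/(K+1) :=
      fun n => aux_exists_small hprod_int hδ n
    choose T hT1 hT2 hT3 using hchoice
    have htendT : Filter.Tendsto T Filter.atTop Filter.atTop :=
      Filter.tendsto_atTop_mono hT1 tendsto_natCast_atTop_atTop
    have hlim := intervalIntegral_tendsto_integral_Ioi 0 hqint htendT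
    refine le_of_tendsto hlim (Filter.Eventually.of_forall fun n => ?_)
    rw [intervalIntegral.integral_of_le (hT2 n)]
    have hsp := hsplit (T n) (hT2 n)
    have hb := (abs_le.mp (hrIoc (T n) (hT2 n))).1
    have hfb : f (T n) ≤ ε := by
      have hm := hfT (T n)
      have h2 : K * (‖u (T n)‖ * ‖u' (T n)‖) ≤ K * (ε/(K+1)) :=
        mul_le_mul_of_nonneg_left (hT3 n) hK0
      have h3 : K * (ε/(K+1)) ≤ ε := by
        have h4 : K * (ε/(K+1)) ≤ (K+1) * (ε/(K+1)) :=
          mul_le_mul_of_nonneg_right (by linarith) hδ.le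
        have h5 : (K+1) * (ε/(K+1)) = ε := by field_simp
        linarith
      linarith
    linarith
  · rw [integral_undef hqint, hCst]
    exact mul_nonneg (Real.sqrt_nonneg _) (Real.sqrt_nonneg _)
end

section
/- Assume κ < 1. If u is admissible with u(0) = 0 and u'(0) = Ku, then ‖A³u‖_{L²} ≤ (1 − κ)^{−1/2} · ‖u''' − A³u‖_{L²}. -/
open MeasureTheory Set

section Auxiliary

open Filter Topology

set_option linter.unusedSectionVars false

variable {H : Type*} [NormedAddCommGroup H] [InnerProductSpace ℂ H] [CompleteSpace H]

private lemma rpow32_cont : Continuous (fun μ : ℝ => μ ^ ((3:ℝ)/2)) := by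
  rw [continuous_iff_continuousAt]
  exact fun x => Real.continuousAt_rpow_const x _ (Or.inr (by norm_num))

private lemma spec_nonneg (A : H →L[ℂ] H) (hA : IsSelfAdjoint A) (μ₀ : ℝ) (hμ₀ : 0 < μ₀)
    (hpos : ∀ x : H, μ₀ * ‖x‖ ^ 2 ≤ (inner ℂ (A x) x : ℂ).re) :
    ∀ μ ∈ spectrum ℝ A, 0 ≤ μ := by
  have h0 : (0 : H →L[ℂ] H) ≤ A := by
    rw [ContinuousLinearMap.nonneg_iff_isPositive]
    refine ⟨hA.isSymmetric, fun x => ?_⟩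
    rw [ContinuousLinearMap.reApplyInnerSelf_apply]
    refine le_trans (by positivity) (le_trans (hpos x) ?_)
    simp [RCLike.re_to_complex]
  exact (StarOrderedRing.nonneg_iff_spectrum_nonneg (R := ℝ) A).mp h0

private lemma apow_sq (A : H →L[ℂ] H) (hA : IsSelfAdjoint A)
    (hspec : ∀ μ ∈ spectrum ℝ A, 0 ≤ μ) (x : H) :
    ‖(cfc (fun μ : ℝ => μ ^ ((3:ℝ)/2)) A) x‖ ^ 2 = (inner ℂ ((A ^ 3) x) x : ℂ).re := by
  set T := cfc (fun μ : ℝ => μ ^ ((3:ℝ)/2)) A with hTdef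
  have hT : IsSelfAdjoint T := cfc_predicate _ A
  have hmul : T * T = A ^ 3 := by
    rw [hTdef, ← cfc_mul _ _ A (rpow32_cont.continuousOn) (rpow32_cont.continuousOn)]
    rw [cfc_congr (g := fun μ : ℝ => μ ^ (3 : ℕ)) (fun μ hμ => ?_)]
    · exact cfc_pow_id A 3 hA
    · have h0 : (0:ℝ) ≤ μ := hspec μ hμ
      show μ ^ ((3:ℝ)/2) * μ ^ ((3:ℝ)/2) = μ ^ (3:ℕ)
      rw [← Real.rpow_natCast μ 3, ← Real.rpow_add' h0 (by norm_num)]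
      norm_num
  have h1 : (inner ℂ ((A ^ 3) x) x : ℂ) = inner ℂ (T x) (T x) := by
    calc (inner ℂ ((A ^ 3) x) x : ℂ) = inner ℂ (T (T x)) x := by rw [← hmul]; rfl
      _ = inner ℂ ((ContinuousLinearMap.adjoint T) (T x)) x := by rw [hT.adjoint_eq]
      _ = inner ℂ (T x) (T x) := ContinuousLinearMap.adjoint_inner_left T x (T x)
  rw [h1, @inner_self_eq_norm_sq_to_K ℂ]
  simp [← Complex.ofReal_pow]

private lemma memL2_inner_integrable {μ : Measure ℝ} {f g : ℝ → H}
    (hf : MemLp f 2 μ) (hg : MemLp g 2 μ) :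
    Integrable (fun t => (inner ℂ (f t) (g t) : ℂ)) μ := by
  have h := L2.integrable_inner (𝕜 := ℂ) (hf.toLp f) (hg.toLp g)
  refine h.congr ?_
  filter_upwards [hf.coeFn_toLp, hg.coeFn_toLp] with t h1 h2
  rw [h1, h2]

private lemma memL2_norm_sq_integrable {μ : Measure ℝ} {f : ℝ → H} (hf : MemLp f 2 μ) :
    Integrable (fun t => ‖f t‖ ^ 2) μ := by
  have h := hf.integrable_norm_rpow two_ne_zero ENNReal.ofNat_ne_top
  refine h.congr (Eventually.of_forall fun t => ?_)
  show ‖f t‖ ^ ((2:ENNReal)).toReal = ‖f t‖ ^ 2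
  rw [(by norm_num : ((2:ENNReal)).toReal = ((2:ℕ):ℝ)), Real.rpow_natCast]

private lemma exists_seq_tendsto_zero (F : ℝ → ℝ) (hF : IntegrableOn F (Ioi (0:ℝ)))
    (h0 : ∀ t, 0 ≤ F t) :
    ∃ φ : ℕ → ℝ, Tendsto φ atTop atTop ∧ (∀ n, 0 < φ n) ∧
      Tendsto (fun n => F (φ n)) atTop (𝓝 0) := by
  have key : ∀ n : ℕ, ∃ t : ℝ, ((n:ℝ) + 1 ≤ t ∧ F t < 1 / ((n:ℝ) + 1)) := by
    intro n
    by_contra hcon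
    push_neg at hcon
    have hmeas : volume.restrict (Ioi (0:ℝ)) {x | 1 / ((n:ℝ)+1) ≤ F x} < ⊤ :=
      hF.measure_ge_lt_top (by positivity)
    have hsub : Ici ((n:ℝ)+1) ⊆ {x | 1 / ((n:ℝ)+1) ≤ F x} := fun x hx => hcon x hx
    have hle : volume.restrict (Ioi (0:ℝ)) (Ici ((n:ℝ)+1)) ≤
        volume.restrict (Ioi (0:ℝ)) {x | 1 / ((n:ℝ)+1) ≤ F x} := measure_mono hsub
    rw [Measure.restrict_apply' measurableSet_Ioi] at hle
    have heq : Ici ((n:ℝ)+1) ∩ Ioi 0 = Ici ((n:ℝ)+1) := by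
      apply inter_eq_self_of_subset_left
      intro x hx
      have h1 : (0:ℝ) < (n:ℝ) + 1 := by positivity
      exact lt_of_lt_of_le h1 hx
    rw [heq, Real.volume_Ici] at hle
    exact absurd (lt_of_le_of_lt hle hmeas) (by simp)
  choose φ hφ1 hφ2 using key
  refine ⟨φ, ?_, ?_, ?_⟩
  · refine tendsto_atTop_mono (fun n => ?_) tendsto_natCast_atTop_atTop
    linarith [hφ1 n]
  · intro n
    have h1 : (0:ℝ) < (n:ℝ) + 1 := by positivity
    exact lt_of_lt_of_le h1 (hφ1 n)
  · refine squeeze_zero (fun n => h0 _) (fun n => (hφ2 n).le) ?_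
    exact tendsto_one_div_add_atTop_nhds_zero_nat

private lemma ftc_vec {E : Type*} [NormedAddCommGroup E] [NormedSpace ℝ E] [CompleteSpace E]
    (g g' : ℝ → E) (hd : ∀ t ∈ Ici (0:ℝ), HasDerivWithinAt g (g' t) (Ici 0) t)
    (hc' : ContinuousOn g' (Ici 0)) {T : ℝ} (hT : 0 ≤ T) :
    ∫ s in Ioc (0:ℝ) T, g' s = g T - g 0 := by
  have hc : ContinuousOn g (Ici 0) := fun t ht => (hd t ht).continuousWithinAt
  have h := intervalIntegral.integral_eq_sub_of_hasDeriv_right_of_le hT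
    (hc.mono Icc_subset_Ici_self)
    (fun x hx => ((hd x hx.1.le).hasDerivAt (Ici_mem_nhds hx.1)).hasDerivWithinAt)
    ((hc'.mono Icc_subset_Ici_self).intervalIntegrable_of_Icc hT)
  rwa [intervalIntegral.integral_of_le hT] at h

private lemma fubini_step (B : H →L[ℂ] H) (u u' u'' u''' : ℝ → H)
    (hd1 : ∀ t ∈ Ici (0:ℝ), HasDerivWithinAt u (u' t) (Ici 0) t)
    (hd2 : ∀ t ∈ Ici (0:ℝ), HasDerivWithinAt u' (u'' t) (Ici 0) t)
    (hl3 : LocallyIntegrableOn u''' (Ici 0))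
    (hfund : ∀ t ∈ Ici (0:ℝ), u'' t = u'' 0 + ∫ s in Ioc (0:ℝ) t, u''' s)
    (T : ℝ) (hT : 0 < T) :
    ∫ t in Ioc (0:ℝ) T, (inner ℂ (u''' t) (B (u t)) : ℂ)
      = inner ℂ (u'' T - u'' 0) (B (u T))
        - ∫ s in Ioc (0:ℝ) T, (inner ℂ (u'' s - u'' 0) (B (u' s)) : ℂ) := by
  have hcu : ContinuousOn u (Ici 0) := fun t ht => (hd1 t ht).continuousWithinAt
  have hcu' : ContinuousOn u' (Ici 0) := fun t ht => (hd2 t ht).continuousWithinAt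
  have hBu : ContinuousOn (fun s => B (u s)) (Ici 0) := B.continuous.comp_continuousOn hcu
  have hBu' : ContinuousOn (fun s => B (u' s)) (Ici 0) := B.continuous.comp_continuousOn hcu'
  have h3icc : IntegrableOn u''' (Icc 0 T) :=
    hl3.integrableOn_compact_subset Icc_subset_Ici_self isCompact_Icc
  have h3 : IntegrableOn u''' (Ioc 0 T) := h3icc.mono_set Ioc_subset_Icc_self
  set μT := volume.restrict (Ioc (0:ℝ) T) with hμT
  haveI : IsFiniteMeasure μT := by
    constructor
    rw [hμT, Measure.restrict_apply_univ, Real.volume_Ioc]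
    exact ENNReal.ofReal_lt_top
  obtain ⟨M, hM⟩ := (isCompact_Icc (a := (0:ℝ)) (b := T)).exists_bound_of_continuousOn
    (hBu'.mono Icc_subset_Ici_self)
  obtain ⟨M₂, hM₂⟩ := (isCompact_Icc (a := (0:ℝ)) (b := T)).exists_bound_of_continuousOn
    (hBu.mono Icc_subset_Ici_self)
  -- derivative of B ∘ u at positive points
  have hBuDeriv : ∀ x : ℝ, 0 < x → HasDerivAt (fun s => B (u s)) (B (u' x)) x := by
    intro x hx
    exact ((B.restrictScalars ℝ).hasFDerivAt (x := u x)).comp_hasDerivAt x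
      ((hd1 x hx.le).hasDerivAt (Ici_mem_nhds hx))
  -- Step A : FTC for B ∘ u on [t,T]
  have stepA : ∀ t ∈ Ioc (0:ℝ) T, B (u T) - B (u t) = ∫ s in Ioc t T, B (u' s) := by
    intro t ht
    have h1 : ∫ s in t..T, B (u' s) = B (u T) - B (u t) := by
      apply intervalIntegral.integral_eq_sub_of_hasDeriv_right_of_le ht.2
        (hBu.mono (Icc_subset_Ici_self.trans (Ici_subset_Ici.mpr ht.1.le) : Icc t T ⊆ Ici 0))
        (fun x hx => ((hBuDeriv x (ht.1.trans hx.1)).hasDerivWithinAt))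
        ((hBu'.mono ((Icc_subset_Ici_self).trans (Ici_subset_Ici.mpr ht.1.le))).intervalIntegrable_of_Icc ht.2)
    rw [intervalIntegral.integral_of_le ht.2] at h1
    exact h1.symm
  have hBu'int : ∀ t ∈ Ioc (0:ℝ) T, IntegrableOn (fun s => B (u' s)) (Ioc t T) := by
    intro t ht
    exact ((hBu'.mono ((Icc_subset_Ici_self).trans (Ici_subset_Ici.mpr ht.1.le))).integrableOn_Icc).mono_set
      Ioc_subset_Icc_self
  -- pointwise identity
  have stepA' : ∀ t ∈ Ioc (0:ℝ) T,
      (inner ℂ (u''' t) (B (u t)) : ℂ) = inner ℂ (u''' t) (B (u T))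
        - ∫ s in Ioc t T, (inner ℂ (u''' t) (B (u' s)) : ℂ) := by
    intro t ht
    have h1 : (inner ℂ (u''' t) (B (u T) - B (u t)) : ℂ)
        = ∫ s in Ioc t T, (inner ℂ (u''' t) (B (u' s)) : ℂ) := by
      rw [stepA t ht, integral_inner (hBu'int t ht) (u''' t)]
    rw [inner_sub_right] at h1
    linear_combination -h1
  -- the double integral setup
  set g : ℝ × ℝ → ℂ := fun p => inner ℂ (u''' p.1) (B (u' p.2)) with hgdef
  set S : Set (ℝ × ℝ) := {p : ℝ × ℝ | p.1 < p.2} with hSdef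
  have hSmeas : MeasurableSet S := measurableSet_lt measurable_fst measurable_snd
  have h3m : AEStronglyMeasurable u''' μT := h3.aestronglyMeasurable
  have hBu'm : AEStronglyMeasurable (fun s => B (u' s)) μT :=
    ((hBu'.mono (Ioc_subset_Icc_self.trans Icc_subset_Ici_self)).aestronglyMeasurable
      measurableSet_Ioc)
  have hBum : AEStronglyMeasurable (fun s => B (u s)) μT :=
    ((hBu.mono (Ioc_subset_Icc_self.trans Icc_subset_Ici_self)).aestronglyMeasurable
      measurableSet_Ioc)
  have hGm : AEStronglyMeasurable g (μT.prod μT) := h3m.comp_fst.inner (𝕜 := ℂ) hBu'm.comp_snd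
  have hbound : ∀ᵐ p ∂(μT.prod μT), ‖S.indicator g p‖ ≤ ‖u''' p.1‖ * M := by
    rw [hμT, Measure.prod_restrict]
    filter_upwards [ae_restrict_mem (measurableSet_Ioc.prod measurableSet_Ioc)] with p hp
    calc ‖S.indicator g p‖ ≤ ‖g p‖ := norm_indicator_le_norm_self _ _
      _ ≤ ‖u''' p.1‖ * ‖B (u' p.2)‖ := norm_inner_le_norm _ _
      _ ≤ ‖u''' p.1‖ * M := by
          refine mul_le_mul_of_nonneg_left (hM p.2 ?_) (norm_nonneg _)
          exact Ioc_subset_Icc_self hp.2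
  have hind : Integrable (S.indicator g) (μT.prod μT) :=
    Integrable.mono' (h3.norm.mul_prod (integrable_const M)) (hGm.indicator hSmeas) hbound
  -- conjugation trick
  have conjtrick : ∀ (X : Set ℝ), IntegrableOn u''' X → ∀ c : H,
      ∫ t in X, (inner ℂ (u''' t) c : ℂ) = inner ℂ (∫ t in X, u''' t) c := by
    intro X hX c
    calc ∫ t in X, (inner ℂ (u''' t) c : ℂ)
        = ∫ t in X, (starRingEnd ℂ) (inner ℂ c (u''' t)) := by
          refine integral_congr_ae (Eventually.of_forall fun t => ?_)
          exact (inner_conj_symm _ _).symm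
      _ = (starRingEnd ℂ) (∫ t in X, (inner ℂ c (u''' t) : ℂ)) := integral_conj
      _ = (starRingEnd ℂ) (inner ℂ c (∫ t in X, u''' t)) := by rw [integral_inner hX]
      _ = inner ℂ (∫ t in X, u''' t) c := inner_conj_symm _ _
  -- t-slice
  have tslice : ∀ t ∈ Ioc (0:ℝ) T,
      (∫ s, S.indicator g (t, s) ∂μT) = ∫ s in Ioc t T, (inner ℂ (u''' t) (B (u' s)) : ℂ) := by
    intro t ht
    have e1 : (fun s => S.indicator g (t, s))
        = (Ioi t).indicator (fun s => (inner ℂ (u''' t) (B (u' s)) : ℂ)) := by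
      funext s
      rw [Set.indicator_apply, Set.indicator_apply]
      rfl
    have e2 : Ioi t ∩ Ioc 0 T = Ioc t T := by
      ext x
      simp only [mem_inter_iff, mem_Ioi, mem_Ioc]
      constructor
      · rintro ⟨h1, _, h2⟩; exact ⟨h1, h2⟩
      · rintro ⟨h1, h2⟩; exact ⟨h1, ht.1.trans h1, h2⟩
    rw [e1, integral_indicator measurableSet_Ioi, hμT,
      Measure.restrict_restrict measurableSet_Ioi, e2]
  -- s-slice
  have sslice : ∀ s ∈ Ioc (0:ℝ) T,
      (∫ t, S.indicator g (t, s) ∂μT) = (inner ℂ (u'' s - u'' 0) (B (u' s)) : ℂ) := by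
    intro s hs
    have e1 : (fun t => S.indicator g (t, s))
        = (Iio s).indicator (fun t => (inner ℂ (u''' t) (B (u' s)) : ℂ)) := by
      funext t
      rw [Set.indicator_apply, Set.indicator_apply]
      rfl
    have e2 : Iio s ∩ Ioc 0 T = Ioo 0 s := by
      ext x
      simp only [mem_inter_iff, mem_Iio, mem_Ioc, mem_Ioo]
      constructor
      · rintro ⟨h1, h2, _⟩; exact ⟨h2, h1⟩
      · rintro ⟨h1, h2⟩; exact ⟨h2, h1, (h2.le.trans hs.2)⟩
    rw [e1, integral_indicator measurableSet_Iio, hμT,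
      Measure.restrict_restrict measurableSet_Iio, e2]
    have hIoo : IntegrableOn u''' (Ioo 0 s) :=
      (h3.mono_set (Ioc_subset_Ioc_right hs.2)).mono_set Ioo_subset_Ioc_self
    have e3 : (∫ t in Ioc (0:ℝ) s, u''' t) = u'' s - u'' 0 := by
      rw [hfund s hs.1.le]
      exact (add_sub_cancel_left _ _).symm
    rw [conjtrick _ hIoo, ← integral_Ioc_eq_integral_Ioo, e3]
  -- integrability of pieces
  have hInt1 : Integrable (fun t => (inner ℂ (u''' t) (B (u T)) : ℂ)) μT := h3.inner_const _
  have hInt2 : Integrable (fun t => (inner ℂ (u''' t) (B (u t)) : ℂ)) μT := by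
    refine Integrable.mono' (h3.norm.mul_const M₂) (h3m.inner hBum) ?_
    rw [hμT]
    filter_upwards [ae_restrict_mem measurableSet_Ioc] with t ht
    calc ‖(inner ℂ (u''' t) (B (u t)) : ℂ)‖ ≤ ‖u''' t‖ * ‖B (u t)‖ := norm_inner_le_norm _ _
      _ ≤ ‖u''' t‖ * M₂ :=
        mul_le_mul_of_nonneg_left (hM₂ t (Ioc_subset_Icc_self ht)) (norm_nonneg _)
  set φ : ℝ → ℂ := fun t => ∫ s, S.indicator g (t, s) ∂μT with hφdef
  have hφae : (fun t => (inner ℂ (u''' t) (B (u T)) : ℂ) - (inner ℂ (u''' t) (B (u t)) : ℂ)) =ᵐ[μT] φ := by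
    rw [hμT]
    filter_upwards [ae_restrict_mem measurableSet_Ioc] with t ht
    rw [hφdef]
    simp only
    rw [tslice t ht]
    have := stepA' t ht
    linear_combination -this
  have hφint : Integrable φ μT := (hInt1.sub hInt2).congr hφae
  have huncurry : Integrable (Function.uncurry fun t s => S.indicator g (t, s)) (μT.prod μT) := hind
  have e3T : (∫ t in Ioc (0:ℝ) T, u''' t) = u'' T - u'' 0 := by
    rw [hfund T hT.le]
    exact (add_sub_cancel_left _ _).symm
  calc ∫ t in Ioc (0:ℝ) T, (inner ℂ (u''' t) (B (u t)) : ℂ)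
      = ∫ t, ((inner ℂ (u''' t) (B (u T)) : ℂ) - φ t) ∂μT := by
        rw [hμT]
        refine setIntegral_congr_fun measurableSet_Ioc (fun t ht => ?_)
        have h1 := stepA' t ht
        have h2 := tslice t ht
        rw [hφdef]
        simp only
        rw [h2, h1]
    _ = (∫ t, (inner ℂ (u''' t) (B (u T)) : ℂ) ∂μT) - ∫ t, φ t ∂μT := integral_sub hInt1 hφint
    _ = inner ℂ (u'' T - u'' 0) (B (u T))
        - ∫ s in Ioc (0:ℝ) T, (inner ℂ (u'' s - u'' 0) (B (u' s)) : ℂ) := by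
        congr 1
        · rw [show (∫ t, (inner ℂ (u''' t) (B (u T)) : ℂ) ∂μT)
              = ∫ t in Ioc (0:ℝ) T, (inner ℂ (u''' t) (B (u T)) : ℂ) from rfl,
            conjtrick _ h3 _, e3T]
        · rw [hφdef]
          have hswap := integral_integral_swap huncurry
          rw [hswap, hμT]
          exact setIntegral_congr_fun measurableSet_Ioc (fun s hs => sslice s hs)

end Auxiliary
open Filter Topology in
/-- Assume `κ < 1`. If `u` is admissible with `u(0) = 0` and `u'(0) = Ku`, then
`‖A³u‖_{L²} ≤ (1 − κ)^{−1/2} ‖u''' − A³u‖_{L²}`. -/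
theorem stmt_14 {H : Type*} [NormedAddCommGroup H] [InnerProductSpace ℂ H] [CompleteSpace H]
    (A : H →L[ℂ] H) (hA : IsSelfAdjoint A) (μ₀ : ℝ) (hμ₀ : 0 < μ₀)
    (hpos : ∀ x : H, μ₀ * ‖x‖ ^ 2 ≤ (inner ℂ (A x) x : ℂ).re)
    (K : (ℝ → H) →ₗ[ℂ] H) (κ : ℝ) (hκ0 : 0 ≤ κ)
    (hK : ∀ u u' u'' u''' : ℝ → H, Admissible u u' u'' u''' →
      ‖Apow A (3 / 2) (K u)‖ ≤ κ * Wnorm A u u''')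
    (hκ1 : κ < 1)
    (u u' u'' u''' : ℝ → H) (hu : Admissible u u' u'' u''')
    (h0 : u 0 = 0) (h1 : u' 0 = K u) :
    L2norm (fun t => (A ^ 3) (u t))
      ≤ (1 - κ) ^ (-(1 : ℝ) / 2) * L2norm (fun t => u''' t - (A ^ 3) (u t)) := by
  set B : H →L[ℂ] H := A ^ 3 with hBdef
  have hBsa : IsSelfAdjoint B := hA.pow 3
  -- continuity facts
  have hcu : ContinuousOn u (Ici 0) := fun t ht => (hu.hasDeriv1 t ht).continuousWithinAt
  have hcu' : ContinuousOn u' (Ici 0) := fun t ht => (hu.hasDeriv2 t ht).continuousWithinAt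
  have hBu : ContinuousOn (fun s => B (u s)) (Ici 0) := B.continuous.comp_continuousOn hcu
  have hBu' : ContinuousOn (fun s => B (u' s)) (Ici 0) := B.continuous.comp_continuousOn hcu'
  have hBuL2 : MemLp (fun t => B (u t)) 2 (volume.restrict (Ioi 0)) := B.comp_memLp' hu.sq0
  -- integrability facts
  have i1 : Integrable (fun t => ‖B (u t)‖ ^ 2) (volume.restrict (Ioi (0:ℝ))) :=
    memL2_norm_sq_integrable hBuL2
  have i2 : Integrable (fun t => ‖u''' t‖ ^ 2) (volume.restrict (Ioi (0:ℝ))) :=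
    memL2_norm_sq_integrable hu.sq3
  have i4 : Integrable (fun t => (inner ℂ (u''' t) (B (u t)) : ℂ)) (volume.restrict (Ioi (0:ℝ))) :=
    memL2_inner_integrable hu.sq3 hBuL2
  set r : ℝ → ℝ := fun t => (inner ℂ (u''' t) (B (u t)) : ℂ).re with hr
  have i4re : Integrable r (volume.restrict (Ioi (0:ℝ))) := i4.re
  set I3 := ∫ t in Ioi (0:ℝ), ‖u''' t‖ ^ 2 with hI3
  set IB := ∫ t in Ioi (0:ℝ), ‖B (u t)‖ ^ 2 with hIB
  have hI3nn : 0 ≤ I3 := integral_nonneg fun t => by positivity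
  have hIBnn : 0 ≤ IB := integral_nonneg fun t => by positivity
  -- the sequence along which boundary terms vanish
  set F : ℝ → ℝ := fun t => ‖u t‖ ^ 2 + ‖u' t‖ ^ 2 + ‖u'' t‖ ^ 2 with hF
  have hFint : IntegrableOn F (Ioi (0:ℝ)) :=
    ((memL2_norm_sq_integrable hu.sq0).add (memL2_norm_sq_integrable hu.sq1)).add
      (memL2_norm_sq_integrable hu.sq2)
  obtain ⟨φ, hφtop, hφpos, hφ0⟩ := exists_seq_tendsto_zero F hFint (fun t => by positivity)
  have hFlim : Tendsto (fun n => ‖B‖ * F (φ n)) atTop (𝓝 0) := by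
    simpa using hφ0.const_mul ‖B‖
  have hbd1 : ∀ t : ℝ, |(inner ℂ (u'' t) (B (u t)) : ℂ).re| ≤ ‖B‖ * F t := by
    intro t
    calc |(inner ℂ (u'' t) (B (u t)) : ℂ).re| ≤ ‖(inner ℂ (u'' t) (B (u t)) : ℂ)‖ :=
          Complex.abs_re_le_norm _
      _ ≤ ‖u'' t‖ * ‖B (u t)‖ := norm_inner_le_norm _ _
      _ ≤ ‖u'' t‖ * (‖B‖ * ‖u t‖) :=
          mul_le_mul_of_nonneg_left (B.le_opNorm _) (norm_nonneg _)
      _ ≤ ‖B‖ * F t := by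
          simp only [hF]
          nlinarith [mul_nonneg (norm_nonneg B) (sq_nonneg (‖u'' t‖ - ‖u t‖)),
            mul_nonneg (norm_nonneg B) (sq_nonneg ‖u' t‖),
            mul_nonneg (norm_nonneg B) (mul_nonneg (norm_nonneg (u'' t)) (norm_nonneg (u t)))]
  have hbd2 : ∀ t : ℝ, |(inner ℂ (u' t) (B (u' t)) : ℂ).re| ≤ ‖B‖ * F t := by
    intro t
    calc |(inner ℂ (u' t) (B (u' t)) : ℂ).re| ≤ ‖(inner ℂ (u' t) (B (u' t)) : ℂ)‖ :=
          Complex.abs_re_le_norm _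
      _ ≤ ‖u' t‖ * ‖B (u' t)‖ := norm_inner_le_norm _ _
      _ ≤ ‖u' t‖ * (‖B‖ * ‖u' t‖) :=
          mul_le_mul_of_nonneg_left (B.le_opNorm _) (norm_nonneg _)
      _ ≤ ‖B‖ * F t := by
          simp only [hF]
          nlinarith [mul_nonneg (norm_nonneg B) (sq_nonneg ‖u t‖),
            mul_nonneg (norm_nonneg B) (sq_nonneg ‖u'' t‖)]
  have hT1 : Tendsto (fun n => (inner ℂ (u'' (φ n)) (B (u (φ n))) : ℂ).re) atTop (𝓝 0) :=
    squeeze_zero_norm (fun n => by simpa [Real.norm_eq_abs] using hbd1 (φ n)) hFlim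
  have hT2 : Tendsto (fun n => (inner ℂ (u' (φ n)) (B (u' (φ n))) : ℂ).re) atTop (𝓝 0) :=
    squeeze_zero_norm (fun n => by simpa [Real.norm_eq_abs] using hbd2 (φ n)) hFlim
  -- derivative of q
  have hq' : ∀ t ∈ Ici (0:ℝ), HasDerivWithinAt (fun s => (inner ℂ (u' s) (B (u' s)) : ℂ).re)
      (2 * (inner ℂ (u'' t) (B (u' t)) : ℂ).re) (Ici 0) t := by
    intro t ht
    have hd1 : HasDerivWithinAt u' (u'' t) (Ici 0) t := hu.hasDeriv2 t ht
    have hd2 : HasDerivWithinAt (fun s => B (u' s)) (B (u'' t)) (Ici 0) t :=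
      ((B.restrictScalars ℝ).hasFDerivAt).comp_hasDerivWithinAt t hd1
    have h3 := hd1.inner ℂ hd2
    have h4 : HasDerivWithinAt (fun s => (inner ℂ (u' s) (B (u' s)) : ℂ).re)
        ((inner ℂ (u' t) (B (u'' t)) : ℂ).re + (inner ℂ (u'' t) (B (u' t)) : ℂ).re) (Ici 0) t := by
      have := (Complex.reCLM.hasFDerivAt).comp_hasDerivWithinAt t h3
      exact this
    have hval : (inner ℂ (u' t) (B (u'' t)) : ℂ).re = (inner ℂ (u'' t) (B (u' t)) : ℂ).re := by
      have e1 : (inner ℂ (u' t) (B (u'' t)) : ℂ) = inner ℂ (B (u' t)) (u'' t) := by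
        rw [← ContinuousLinearMap.adjoint_inner_left B (u'' t) (u' t), hBsa.adjoint_eq]
      rw [e1, ← inner_conj_symm, Complex.conj_re]
    have heq : 2 * (inner ℂ (u'' t) (B (u' t)) : ℂ).re
        = (inner ℂ (u' t) (B (u'' t)) : ℂ).re + (inner ℂ (u'' t) (B (u' t)) : ℂ).re := by
      rw [hval]; ring
    rw [heq]
    exact h4
  have hs_cont : ContinuousOn (fun t => 2 * (inner ℂ (u'' t) (B (u' t)) : ℂ).re) (Ici (0:ℝ)) := by
    exact continuousOn_const.mul
      (Complex.continuous_re.comp_continuousOn (hu.cont2.inner hBu'))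
  -- the main identity for each T > 0
  have EqT : ∀ T : ℝ, 0 < T → (∫ t in Ioc (0:ℝ) T, r t)
      = (inner ℂ (u'' T) (B (u T)) : ℂ).re
        - ((inner ℂ (u' T) (B (u' T)) : ℂ).re - (inner ℂ (u' 0) (B (u' 0)) : ℂ).re) / 2 := by
    intro T hT
    have hfub := fubini_step B u u' u'' u''' hu.hasDeriv1 hu.hasDeriv2 hu.locInt3 hu.fund T hT
    have hBuftc : (∫ s in Ioc (0:ℝ) T, B (u' s)) = B (u T) := by
      have h := ftc_vec (fun s => B (u s)) (fun s => B (u' s))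
        (fun t ht => ((B.restrictScalars ℝ).hasFDerivAt).comp_hasDerivWithinAt t
          (hu.hasDeriv1 t ht)) hBu' hT.le
      simp only [h0, map_zero, sub_zero] at h
      exact h
    have hBu'intIoc : IntegrableOn (fun s => B (u' s)) (Ioc (0:ℝ) T) :=
      ((hBu'.mono Icc_subset_Ici_self).integrableOn_Icc).mono_set Ioc_subset_Icc_self
    have hInnIoc : IntegrableOn (fun s => (inner ℂ (u'' s) (B (u' s)) : ℂ)) (Ioc (0:ℝ) T) :=
      ((((hu.cont2).inner hBu').mono Icc_subset_Ici_self).integrableOn_Icc).mono_set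
        Ioc_subset_Icc_self
    have hsub : (∫ s in Ioc (0:ℝ) T, (inner ℂ (u'' s - u'' 0) (B (u' s)) : ℂ))
        = (∫ s in Ioc (0:ℝ) T, (inner ℂ (u'' s) (B (u' s)) : ℂ)) - inner ℂ (u'' 0) (B (u T)) := by
      have e1 : ∀ s : ℝ, (inner ℂ (u'' s - u'' 0) (B (u' s)) : ℂ)
          = (inner ℂ (u'' s) (B (u' s)) : ℂ) - (inner ℂ (u'' 0) (B (u' s)) : ℂ) :=
        fun s => inner_sub_left _ _ _
      rw [integral_congr_ae (Eventually.of_forall e1),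
        integral_sub hInnIoc (hBu'intIoc.const_inner _), integral_inner hBu'intIoc, hBuftc]
    have hfub2 : (∫ t in Ioc (0:ℝ) T, (inner ℂ (u''' t) (B (u t)) : ℂ))
        = inner ℂ (u'' T) (B (u T)) - ∫ s in Ioc (0:ℝ) T, (inner ℂ (u'' s) (B (u' s)) : ℂ) := by
      rw [hfub, hsub, inner_sub_left]
      ring
    have hqftc : (∫ s in Ioc (0:ℝ) T, 2 * (inner ℂ (u'' s) (B (u' s)) : ℂ).re)
        = (inner ℂ (u' T) (B (u' T)) : ℂ).re - (inner ℂ (u' 0) (B (u' 0)) : ℂ).re :=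
      ftc_vec (fun s => (inner ℂ (u' s) (B (u' s)) : ℂ).re)
        (fun s => 2 * (inner ℂ (u'' s) (B (u' s)) : ℂ).re) hq' hs_cont hT.le
    have i4' : IntegrableOn (fun t => (inner ℂ (u''' t) (B (u t)) : ℂ)) (Ioi (0:ℝ)) volume := i4
    have i4Ioc : IntegrableOn (fun t => (inner ℂ (u''' t) (B (u t)) : ℂ)) (Ioc (0:ℝ) T) :=
      i4'.mono_set Ioc_subset_Ioi_self
    have e1 : (∫ s in Ioc (0:ℝ) T, (inner ℂ (u'' s) (B (u' s)) : ℂ)).re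
        = ∫ s in Ioc (0:ℝ) T, (inner ℂ (u'' s) (B (u' s)) : ℂ).re := (integral_re hInnIoc).symm
    have e2 : (∫ s in Ioc (0:ℝ) T, 2 * (inner ℂ (u'' s) (B (u' s)) : ℂ).re)
        = 2 * ∫ s in Ioc (0:ℝ) T, (inner ℂ (u'' s) (B (u' s)) : ℂ).re := integral_const_mul 2 _
    have e3 : (∫ t in Ioc (0:ℝ) T, r t)
        = (∫ t in Ioc (0:ℝ) T, (inner ℂ (u''' t) (B (u t)) : ℂ)).re := integral_re i4Ioc
    rw [e3, hfub2, Complex.sub_re, e1]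
    rw [e2] at hqftc
    linarith
  -- take the limit along the sequence φ
  have hlim1 : Tendsto (fun n => ∫ t in Ioc (0:ℝ) (φ n), r t) atTop
      (𝓝 (∫ t in Ioi (0:ℝ), r t)) := by
    have i4re' : IntegrableOn r (Ioi (0:ℝ)) volume := i4re
    have h := intervalIntegral_tendsto_integral_Ioi 0 i4re' hφtop
    refine h.congr (fun n => ?_)
    rw [intervalIntegral.integral_of_le (hφpos n).le]
  have hlim2 : Tendsto (fun n => ∫ t in Ioc (0:ℝ) (φ n), r t) atTop
      (𝓝 (0 - (0 - (inner ℂ (u' 0) (B (u' 0)) : ℂ).re) / 2)) := by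
    have h := hT1.sub ((hT2.sub (tendsto_const_nhds
      (x := (inner ℂ (u' 0) (B (u' 0)) : ℂ).re))).div_const 2)
    exact Tendsto.congr (fun n => (EqT (φ n) (hφpos n)).symm) h
  set q0 := (inner ℂ (u' 0) (B (u' 0)) : ℂ).re with hq0
  have hkey : (∫ t in Ioi (0:ℝ), r t) = q0 / 2 := by
    have h := tendsto_nhds_unique hlim1 hlim2
    rw [h, hq0]
    ring
  -- expansion of the norm squared of the difference
  set IF := ∫ t in Ioi (0:ℝ), ‖u''' t - B (u t)‖ ^ 2 with hIF
  have hexp : IF = I3 - 2 * (∫ t in Ioi (0:ℝ), r t) + IB := by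
    rw [hIF]
    have e : ∀ t : ℝ, ‖u''' t - B (u t)‖ ^ 2 = ‖u''' t‖ ^ 2 - 2 * r t + ‖B (u t)‖ ^ 2 :=
      fun t => norm_sub_sq (𝕜 := ℂ) (u''' t) (B (u t))
    have ic : Integrable (fun a : ℝ => 2 * r a) (volume.restrict (Ioi 0)) := i4re.const_mul 2
    have ia : Integrable (fun a : ℝ => ‖u''' a‖ ^ 2 - 2 * r a) (volume.restrict (Ioi 0)) :=
      i2.sub ic
    rw [integral_congr_ae (Eventually.of_forall e), integral_add ia i1, integral_sub i2 ic,
      integral_const_mul]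
  -- the cfc bound
  have hspec := spec_nonneg A hA μ₀ hμ₀ hpos
  have happ : ‖Apow A (3 / 2) (K u)‖ ^ 2 = q0 := by
    rw [hq0, ← h1]
    have happ2 := apow_sq A hA hspec (u' 0)
    rw [show Apow A (3 / 2) = cfc (fun μ : ℝ => μ ^ ((3:ℝ)/2)) A from rfl, happ2]
    have e1 : (inner ℂ ((A ^ 3) (u' 0)) (u' 0) : ℂ)
        = (starRingEnd ℂ) (inner ℂ (u' 0) ((A ^ 3) (u' 0))) := (inner_conj_symm _ _).symm
    rw [e1, Complex.conj_re, ← hBdef]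
  have hW : Wnorm A u u''' = Real.sqrt (I3 + IB) := rfl
  have hq0le : q0 ≤ κ ^ 2 * (I3 + IB) := by
    have hKb := hK u u' u'' u''' hu
    have h2 : ‖Apow A (3 / 2) (K u)‖ ^ 2 ≤ (κ * Wnorm A u u''') ^ 2 :=
      pow_le_pow_left₀ (norm_nonneg _) hKb 2
    rw [happ] at h2
    calc q0 ≤ (κ * Wnorm A u u''') ^ 2 := h2
      _ = κ ^ 2 * (I3 + IB) := by
          rw [mul_pow, hW, Real.sq_sqrt (by positivity)]
  -- final arithmetic
  have hκκ : κ ^ 2 ≤ κ := by nlinarith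
  have h1κ : (0:ℝ) < 1 - κ := by linarith
  have hIFle : (1 - κ) * IB ≤ IF := by
    rw [hexp, hkey]
    nlinarith [hI3nn, hIBnn]
  have hIBle : IB ≤ (1 - κ)⁻¹ * IF := by
    rw [inv_mul_eq_div, le_div_iff₀ h1κ, mul_comm]
    exact hIFle
  have hpow : Real.sqrt ((1 - κ)⁻¹) = (1 - κ) ^ (-(1:ℝ) / 2) := by
    rw [Real.sqrt_inv, Real.sqrt_eq_rpow, neg_div, Real.rpow_neg h1κ.le]
  show Real.sqrt (∫ t in Ioi (0:ℝ), ‖B (u t)‖ ^ 2)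
      ≤ (1 - κ) ^ (-(1:ℝ) / 2) * Real.sqrt (∫ t in Ioi (0:ℝ), ‖u''' t - B (u t)‖ ^ 2)
  calc Real.sqrt (∫ t in Ioi (0:ℝ), ‖B (u t)‖ ^ 2)
      = Real.sqrt IB := rfl
    _ ≤ Real.sqrt ((1 - κ)⁻¹ * IF) := Real.sqrt_le_sqrt hIBle
    _ = Real.sqrt ((1 - κ)⁻¹) * Real.sqrt IF := Real.sqrt_mul (by positivity) _
    _ = (1 - κ) ^ (-(1:ℝ) / 2) * Real.sqrt IF := by rw [hpow]
end
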